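/- arXiv:1406.7311 — 6 statements merged into one kernel-verified Lean document; each statement's English description precedes it below -/
import Mathlib

section
/- Weak Maximum Principle: Let Ω be a bounded open set in ℝ² and let u, v ∈ C²(Ω) ∩ C(closure Ω) be such that u ≤ v on ∂Ω and Lv(x) ≤ Lu(x) for all x ∈ Ω. Then u ≤ v on all of Ω. -/
open MeasureTheory Real Set

noncomputable section

/-- First partial derivative in the `x₁` direction. -/
def d1 (u : ℝ × ℝ → ℝ) (x : ℝ × ℝ) : ℝ := fderiv ℝ u x (1, 0)

/-- First partial derivative in the `x₂` direction. -/
def d2 (u : ℝ × ℝ → ℝ) (x : ℝ × ℝ) : ℝ := fderiv ℝ u x (0, 1)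

/-- The Grushin-type operator
`Lu = a₁₁ ∂₁₁ u + 2 a₁₂ x₁ ∂₁₂ u + a₂₂ x₁² ∂₂₂ u`. -/
def Lop (a11 a12 a22 : ℝ × ℝ → ℝ) (u : ℝ × ℝ → ℝ) (x : ℝ × ℝ) : ℝ :=
  a11 x * d1 (d1 u) x + 2 * a12 x * x.1 * d2 (d1 u) x + a22 x * x.1 ^ 2 * d2 (d2 u) x

/-- Uniform ellipticity with constants `lam ≤ Lam`. -/
def IsElliptic (lam Lam : ℝ) (a11 a12 a22 : ℝ × ℝ → ℝ) : Prop :=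
  ∀ x ξ : ℝ × ℝ,
    lam * (ξ.1 ^ 2 + ξ.2 ^ 2) ≤ a11 x * ξ.1 ^ 2 + 2 * a12 x * ξ.1 * ξ.2 + a22 x * ξ.2 ^ 2 ∧
      a11 x * ξ.1 ^ 2 + 2 * a12 x * ξ.1 * ξ.2 + a22 x * ξ.2 ^ 2 ≤ Lam * (ξ.1 ^ 2 + ξ.2 ^ 2)

/-- The quasi distance `d̃`. -/
def qdist (x y : ℝ × ℝ) : ℝ :=
  |x.1 - y.1| + Real.sqrt (x.1 ^ 2 + y.1 ^ 2 + 4 * |x.2 - y.2|) - Real.sqrt (x.1 ^ 2 + y.1 ^ 2)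

/-- Quasi metric ball for `d̃`. -/
def Bq (y : ℝ × ℝ) (r : ℝ) : Set (ℝ × ℝ) := {x | qdist x y < r}

/-- The boxes of Franchi–Lanconelli. -/
def Box (y : ℝ × ℝ) (r : ℝ) : Set (ℝ × ℝ) :=
  {x | |x.1 - y.1| < r ∧ |x.2 - y.2| < r * (|y.1| + r)}

/-- The gauge `ρ(x,y) = ((x₁²−y₁²)² + 4(x₂−y₂)²)^{1/4}`. -/
def grho (x y : ℝ × ℝ) : ℝ :=
  ((x.1 ^ 2 - y.1 ^ 2) ^ 2 + 4 * (x.2 - y.2) ^ 2) ^ ((1 : ℝ) / 4)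

/-- Sublevel set `G(y,r) = {x : g_r(x,y) < r}` of the gauge function `g_r`. -/
def Gset (y : ℝ × ℝ) (r : ℝ) : Set (ℝ × ℝ) :=
  {x | (|y.1| < r ∧ grho x y < r) ∨
    (r ≤ |y.1| ∧ 0 ≤ x.1 * y.1 ∧ grho x y ^ 2 / |y.1| < r)}

/-- Sublevel set `G̃(y,r) = {x : g̃_r(x,y) < r}` of the gauge function `g̃_r`. -/
def Gtil (y : ℝ × ℝ) (r : ℝ) : Set (ℝ × ℝ) :=
  {x | (|y.1| < r ∧ grho x y < r) ∨ (r ≤ |y.1| ∧ grho x y ^ 2 / |y.1| < r)}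

/-- Reflection with respect to the `x₂` axis. -/
def Sref (x : ℝ × ℝ) : ℝ × ℝ := (-x.1, x.2)

/-- Symmetrized quasi metric ball `B̃(y,r) = B(y,r) ∪ B(S(y),r)`. -/
def Btil (y : ℝ × ℝ) (r : ℝ) : Set (ℝ × ℝ) := Bq y r ∪ Bq (Sref y) r

/-- The Euclidean diameter of a subset of `ℝ × ℝ`. -/
def euclDiam (s : Set (ℝ × ℝ)) : ℝ :=
  sSup {d | ∃ x ∈ s, ∃ y ∈ s, d = Real.sqrt ((x.1 - y.1) ^ 2 + (x.2 - y.2) ^ 2)}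

/-- The Euclidean ball of center `z` and radius `r` in `ℝ × ℝ`. -/
def euclBall (z : ℝ × ℝ) (r : ℝ) : Set (ℝ × ℝ) :=
  {x | Real.sqrt ((x.1 - z.1) ^ 2 + (x.2 - z.2) ^ 2) < r}

/-- The convex envelope of `w` on a set `E`: the sup of all affine functions
lying below `w` on `E`. -/
def convEnv (w : ℝ × ℝ → ℝ) (E : Set (ℝ × ℝ)) (x : ℝ × ℝ) : ℝ :=
  sSup {t | ∃ p : ℝ × ℝ, ∃ c : ℝ,
    (∀ z ∈ E, p.1 * z.1 + p.2 * z.2 + c ≤ w z) ∧ t = p.1 * x.1 + p.2 * x.2 + c}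

section Aux
open Filter Topology


lemma sndDerivTest {g g' : ℝ → ℝ} {c : ℝ} (hmax : IsLocalMax g 0)
    (hg : ∀ᶠ t in 𝓝 (0:ℝ), HasDerivAt g (g' t) t)
    (hg' : HasDerivAt g' c 0) : c ≤ 0 := by
  by_contra hc
  push_neg at hc
  have h0 : g' 0 = 0 := by
    have := hmax.hasDerivAt_eq_zero (hg.self_of_nhds)
    simpa using this
  have hslope : Tendsto (fun t => g' t / t) (𝓝[>] (0:ℝ)) (𝓝 c) := by
    have := hasDerivAt_iff_tendsto_slope.1 hg'
    have h2 := this.mono_left (nhdsWithin_mono _ (fun t ht => ne_of_gt ht : Ioi (0:ℝ) ⊆ {(0:ℝ)}ᶜ))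
    refine h2.congr' ?_
    filter_upwards [self_mem_nhdsWithin] with t ht
    simp [slope, h0, (mem_Ioi.1 ht).ne', div_eq_inv_mul]
  have hpos : ∀ᶠ t in 𝓝[>] (0:ℝ), 0 < g' t := by
    have hev : ∀ᶠ t in 𝓝[>] (0:ℝ), 0 < g' t / t :=
      hslope.eventually (eventually_gt_nhds hc)
    filter_upwards [hev, self_mem_nhdsWithin] with t ht ht'
    have := mul_pos ht ht'
    rwa [div_mul_cancel₀ _ (ne_of_gt ht')] at this
  -- combine all eventual facts on a small interval
  have hall : ∀ᶠ t in 𝓝 (0:ℝ), (HasDerivAt g (g' t) t ∧ g t ≤ g 0) := hg.and hmax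
  rcases Metric.eventually_nhds_iff.1 hall with ⟨δ₁, hδ₁, h₁⟩
  rcases (mem_nhdsGT_iff_exists_Ioc_subset).1 hpos with ⟨δ₂, hδ₂, h₂⟩
  set δ := min (δ₁/2) δ₂ with hδdef
  have hδ2' : (0:ℝ) < δ₂ := hδ₂
  have hδpos : 0 < δ := lt_min (by linarith) hδ2'
  have hIcc : ∀ t ∈ Icc (0:ℝ) δ, HasDerivAt g (g' t) t ∧ g t ≤ g 0 := by
    intro t ht
    apply h₁
    have : |t| ≤ δ := by rw [abs_of_nonneg ht.1]; exact ht.2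
    calc dist t 0 = |t| := by simp [Real.dist_eq]
    _ ≤ δ := this
    _ < δ₁ := lt_of_le_of_lt (min_le_left _ _) (by linarith)
  obtain ⟨ξ, hξ, hξeq⟩ := exists_hasDerivAt_eq_slope g g' hδpos
    (fun t ht => ((hIcc t ht).1).continuousAt.continuousWithinAt)
    (fun t ht => (hIcc t ⟨le_of_lt ht.1, le_of_lt ht.2⟩).1)
  have hgδ : g δ ≤ g 0 := (hIcc δ ⟨le_of_lt hδpos, le_rfl⟩).2
  have hξpos : 0 < g' ξ := h₂ ⟨hξ.1, le_of_lt (lt_of_lt_of_le hξ.2 (min_le_right _ _))⟩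
  rw [hξeq] at hξpos
  have : (g δ - g 0) / (δ - 0) ≤ 0 := div_nonpos_of_nonpos_of_nonneg (by linarith) (by linarith)
  linarith

lemma sndDirectional {w : ℝ × ℝ → ℝ} {Ω : Set (ℝ × ℝ)} (hΩ : IsOpen Ω) {x0 : ℝ × ℝ}
    (hx0 : x0 ∈ Ω) (hw : ∀ y ∈ Ω, ContDiffAt ℝ 2 w y)
    (hmax : IsLocalMax w x0) (e : ℝ × ℝ) :
    fderiv ℝ (fderiv ℝ w) x0 e e ≤ 0 := by
  set ℓ : ℝ → ℝ × ℝ := fun t => x0 + t • e with hℓ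
  have hℓ0 : ℓ 0 = x0 := by simp [hℓ]
  have hℓd : ∀ t : ℝ, HasDerivAt ℓ e t := by
    intro t
    simpa [hℓ] using ((hasDerivAt_id t).smul_const e).const_add x0
  have hℓc : Continuous ℓ := by continuity
  have hℓt : Tendsto ℓ (𝓝 0) (𝓝 x0) := by
    rw [← hℓ0]; exact hℓc.tendsto 0
  have hmem : ∀ᶠ t in 𝓝 (0:ℝ), ℓ t ∈ Ω := hℓt.eventually (hΩ.mem_nhds hx0)
  set g : ℝ → ℝ := fun t => w (ℓ t) with hgdef
  set g' : ℝ → ℝ := fun t => fderiv ℝ w (ℓ t) e with hg'def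
  have hmaxg : IsLocalMax g 0 := by
    have h := hℓt.eventually hmax
    filter_upwards [h] with t ht
    simpa [hgdef, hℓ0] using ht
  have hg : ∀ᶠ t in 𝓝 (0:ℝ), HasDerivAt g (g' t) t := by
    filter_upwards [hmem] with t ht
    have hdw : HasFDerivAt w (fderiv ℝ w (ℓ t)) (ℓ t) :=
      ((hw _ ht).differentiableAt (by norm_num)).hasFDerivAt
    exact hdw.comp_hasDerivAt t (hℓd t)
  have hg'' : HasDerivAt g' (fderiv ℝ (fderiv ℝ w) x0 e e) 0 := by
    have hF : HasFDerivAt (fderiv ℝ w) (fderiv ℝ (fderiv ℝ w) x0) x0 :=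
      (((hw _ hx0).fderiv_right (m := 1) (by norm_num)).differentiableAt
        (by norm_num)).hasFDerivAt
    have hc : HasDerivAt (fun t => fderiv ℝ w (ℓ t)) (fderiv ℝ (fderiv ℝ w) x0 e) 0 := by
      rw [← hℓ0] at hF
      have := hF.comp_hasDerivAt 0 (hℓd 0)
      rw [hℓ0] at this
      exact this
    have := hc.clm_apply (hasDerivAt_const 0 e)
    simpa using this
  exact sndDerivTest hmaxg hg hg''



-- d_b (d_a w) x0 = f2 b a
lemma dd_eq_snd {w : ℝ × ℝ → ℝ} {x0 : ℝ × ℝ} (hw : ContDiffAt ℝ 2 w x0) (a b : ℝ × ℝ) :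
    fderiv ℝ (fun y => fderiv ℝ w y a) x0 b = fderiv ℝ (fderiv ℝ w) x0 b a := by
  have hF : DifferentiableAt ℝ (fderiv ℝ w) x0 :=
    (hw.fderiv_right (m := 1) (by norm_num)).differentiableAt (by norm_num)
  have := fderiv_clm_apply hF (differentiableAt_const a)
  rw [this]
  simp

-- bilinear expansion of f2 e e
lemma snd_expand (f2 : (ℝ × ℝ) →L[ℝ] (ℝ × ℝ) →L[ℝ] ℝ) (e : ℝ × ℝ) :
    f2 e e = e.1 ^ 2 * f2 (1,0) (1,0) + e.1 * e.2 * (f2 (1,0) (0,1) + f2 (0,1) (1,0))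
      + e.2 ^ 2 * f2 (0,1) (0,1) := by
  have he : e = e.1 • ((1:ℝ),(0:ℝ)) + e.2 • ((0:ℝ),(1:ℝ)) := by
    ext <;> simp
  conv_lhs => rw [he]
  simp only [map_add, _root_.map_smul, ContinuousLinearMap.add_apply, ContinuousLinearMap.smul_apply,
    smul_eq_mul]
  ring

lemma trace_nonpos {α β γ H11 H12 H22 : ℝ} (hα : 0 < α) (hdet : β ^ 2 ≤ α * γ)
    (hq : ∀ e1 e2 : ℝ, H11 * e1 ^ 2 + 2 * H12 * e1 * e2 + H22 * e2 ^ 2 ≤ 0) :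
    α * H11 + 2 * β * H12 + γ * H22 ≤ 0 := by
  have h1 := hq α β
  have h2 := hq 0 1
  simp at h2
  nlinarith [mul_nonneg (sub_nonneg.2 hdet) (neg_nonneg.2 h2)]


lemma snd_decomp {u v : ℝ × ℝ → ℝ} {Ω : Set (ℝ × ℝ)} (hΩ : IsOpen Ω) {x0 : ℝ × ℝ}
    (hx0 : x0 ∈ Ω) (hu : ContDiffOn ℝ 2 u Ω) (hv : ContDiffOn ℝ 2 v Ω) (ε : ℝ) (a b : ℝ × ℝ)
    {w : ℝ × ℝ → ℝ} (hw : w = fun x => u x - v x + ε * Real.exp x.1) :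
    fderiv ℝ (fderiv ℝ w) x0 a b
      = fderiv ℝ (fderiv ℝ u) x0 a b - fderiv ℝ (fderiv ℝ v) x0 a b
        + ε * Real.exp x0.1 * a.1 * b.1 := by
  subst hw
  set C : (ℝ × ℝ) →L[ℝ] ℝ := ContinuousLinearMap.fst ℝ ℝ ℝ with hC
  have hGd : ∀ y : ℝ × ℝ, HasFDerivAt (fun x : ℝ × ℝ => Real.exp x.1)
      (Real.exp y.1 • C) y := fun y =>
    (Real.hasDerivAt_exp y.1).comp_hasFDerivAt y (hasFDerivAt_fst)
  have hEd : ∀ y : ℝ × ℝ, HasFDerivAt (fun x : ℝ × ℝ => ε * Real.exp x.1)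
      (Real.exp y.1 • (ε • C)) y := by
    intro y
    have := (hGd y).const_mul ε
    rw [smul_comm]
    exact this
  have hw1 : (fun y => fderiv ℝ (fun x => u x - v x + ε * Real.exp x.1) y)
      =ᶠ[𝓝 x0] fun y => fderiv ℝ u y - fderiv ℝ v y + Real.exp y.1 • (ε • C) := by
    filter_upwards [hΩ.mem_nhds hx0] with y hy
    have hud : DifferentiableAt ℝ u y :=
      (hu.contDiffAt (hΩ.mem_nhds hy)).differentiableAt (by norm_num)
    have hvd : DifferentiableAt ℝ v y :=
      (hv.contDiffAt (hΩ.mem_nhds hy)).differentiableAt (by norm_num)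
    exact ((hud.hasFDerivAt.sub hvd.hasFDerivAt).add (hEd y)).fderiv
  have hFu : DifferentiableAt ℝ (fderiv ℝ u) x0 :=
    ((hu.contDiffAt (hΩ.mem_nhds hx0)).fderiv_right (m := 1)
      (by norm_num)).differentiableAt (by norm_num)
  have hFv : DifferentiableAt ℝ (fderiv ℝ v) x0 :=
    ((hv.contDiffAt (hΩ.mem_nhds hx0)).fderiv_right (m := 1)
      (by norm_num)).differentiableAt (by norm_num)
  have hE2 : HasFDerivAt (fun y : ℝ × ℝ => Real.exp y.1 • (ε • C))
      ((Real.exp x0.1 • C).smulRight (ε • C)) x0 :=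
    (hGd x0).smul_const (ε • C)
  rw [hw1.fderiv_eq]
  rw [fderiv_fun_add (f := fun y => fderiv ℝ u y - fderiv ℝ v y) (hFu.sub hFv) hE2.differentiableAt, fderiv_fun_sub hFu hFv, hE2.fderiv]
  simp [hC]
  ring


end Aux

section Main
open Filter Topology

/-- **Weak Maximum Principle** for the Grushin-type operator `L`. -/
theorem weak_maximum_principle (lam Lam : ℝ) (hlam : 0 < lam) (hLam : lam ≤ Lam)
    (a11 a12 a22 : ℝ × ℝ → ℝ) (hell : IsElliptic lam Lam a11 a12 a22)
    (Ω : Set (ℝ × ℝ)) (hΩopen : IsOpen Ω) (hΩbd : Bornology.IsBounded Ω)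
    (u v : ℝ × ℝ → ℝ)
    (hu2 : ContDiffOn ℝ 2 u Ω) (huc : ContinuousOn u (closure Ω))
    (hv2 : ContDiffOn ℝ 2 v Ω) (hvc : ContinuousOn v (closure Ω))
    (hbd : ∀ x ∈ frontier Ω, u x ≤ v x)
    (hL : ∀ x ∈ Ω, Lop a11 a12 a22 v x ≤ Lop a11 a12 a22 u x) :
    ∀ x ∈ Ω, u x ≤ v x := by
  intro x hx
  -- a uniform bound on exp y.1 over closure Ω
  obtain ⟨R, hR⟩ := hΩbd.subset_closedBall 0
  have hRbd : ∀ y ∈ closure Ω, Real.exp y.1 ≤ Real.exp R := by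
    intro y hy
    have hy' : y ∈ Metric.closedBall (0 : ℝ × ℝ) R :=
      (closure_minimal hR Metric.isClosed_closedBall) hy
    have : ‖y‖ ≤ R := by simpa using Metric.mem_closedBall.1 hy'
    exact Real.exp_le_exp.2 (le_trans (le_trans (le_abs_self _)
      (by simpa using norm_fst_le y)) this)
  set M := Real.exp R with hM
  have hMpos : 0 < M := Real.exp_pos R
  -- key estimate for every ε > 0
  have key : ∀ ε : ℝ, 0 < ε → u x - v x ≤ ε * M := by
    intro ε hε
    set w : ℝ × ℝ → ℝ := fun z => u z - v z + ε * Real.exp z.1 with hwdef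
    have hwΩ : ∀ y ∈ Ω, ContDiffAt ℝ 2 w y := by
      intro y hy
      have h1 : ContDiffAt ℝ 2 u y := hu2.contDiffAt (hΩopen.mem_nhds hy)
      have h2 : ContDiffAt ℝ 2 v y := hv2.contDiffAt (hΩopen.mem_nhds hy)
      have h3 : ContDiffAt ℝ 2 (fun z : ℝ × ℝ => ε * Real.exp z.1) y :=
        (ContDiff.contDiffAt (by fun_prop))
      exact (h1.sub h2).add h3
    have hwc : ContinuousOn w (closure Ω) :=
      (huc.sub hvc).add
        ((continuous_const.mul (Real.continuous_exp.comp continuous_fst)).continuousOn)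
    have hKc : IsCompact (closure Ω) :=
      Metric.isCompact_of_isClosed_isBounded isClosed_closure hΩbd.closure
    have hKne : (closure Ω).Nonempty := ⟨x, subset_closure hx⟩
    obtain ⟨x0, hx0K, hx0max⟩ := hKc.exists_isMaxOn hKne hwc
    -- the max point cannot be interior
    have hx0not : x0 ∉ Ω := by
      intro hx0Ω
      have hw0 : ContDiffAt ℝ 2 w x0 := hwΩ x0 hx0Ω
      have hmaxloc : IsLocalMax w x0 :=
        hx0max.isLocalMax (mem_of_superset (hΩopen.mem_nhds hx0Ω) subset_closure)
      set f2 := fderiv ℝ (fderiv ℝ w) x0 with hf2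
      have hqe : ∀ e : ℝ × ℝ, f2 e e ≤ 0 := sndDirectional hΩopen hx0Ω hwΩ hmaxloc
      have hsymm : f2 (1,0) (0,1) = f2 (0,1) (1,0) := hw0.isSymmSndFDerivAt (by simp) (1,0) (0,1)
      set H11 := f2 (1,0) (1,0) with hH11
      set H12 := f2 (0,1) (1,0) with hH12
      set H22 := f2 (0,1) (0,1) with hH22
      have hq : ∀ e1 e2 : ℝ, H11 * e1 ^ 2 + 2 * H12 * e1 * e2 + H22 * e2 ^ 2 ≤ 0 := by
        intro e1 e2
        have := hqe (e1, e2)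
        rw [snd_expand f2 (e1, e2)] at this
        rw [hsymm] at this
        linarith [this]
      set α := a11 x0 with hα
      set β := a12 x0 * x0.1 with hβ
      set γ := a22 x0 * x0.1 ^ 2 with hγ
      have hαlam : lam ≤ α := by
        have := (hell x0 (1, 0)).1
        simpa using this
      have hαpos : 0 < α := lt_of_lt_of_le hlam hαlam
      have hdet : β ^ 2 ≤ α * γ := by
        have hQ := (hell x0 (a12 x0 * x0.1, -(a11 x0) * x0.1)).1
        simp only at hQ
        rw [hβ, hα, hγ]
        have hα2 : (0:ℝ) < a11 x0 := hαpos
        nlinarith [hQ, hlam.le, sq_nonneg (a12 x0 * x0.1), sq_nonneg (a11 x0 * x0.1), hα2]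
      have htr : α * H11 + 2 * β * H12 + γ * H22 ≤ 0 := trace_nonpos hαpos hdet hq
      -- identify with Lop
      have hu0 : ContDiffAt ℝ 2 u x0 := hu2.contDiffAt (hΩopen.mem_nhds hx0Ω)
      have hv0 : ContDiffAt ℝ 2 v x0 := hv2.contDiffAt (hΩopen.mem_nhds hx0Ω)
      have eW11 : d1 (d1 w) x0 = H11 := dd_eq_snd hw0 (1,0) (1,0)
      have eW12 : d2 (d1 w) x0 = H12 := dd_eq_snd hw0 (1,0) (0,1)
      have eW22 : d2 (d2 w) x0 = H22 := dd_eq_snd hw0 (0,1) (0,1)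
      have eU11 : d1 (d1 u) x0 = fderiv ℝ (fderiv ℝ u) x0 (1,0) (1,0) := dd_eq_snd hu0 (1,0) (1,0)
      have eU12 : d2 (d1 u) x0 = fderiv ℝ (fderiv ℝ u) x0 (0,1) (1,0) := dd_eq_snd hu0 (1,0) (0,1)
      have eU22 : d2 (d2 u) x0 = fderiv ℝ (fderiv ℝ u) x0 (0,1) (0,1) := dd_eq_snd hu0 (0,1) (0,1)
      have eV11 : d1 (d1 v) x0 = fderiv ℝ (fderiv ℝ v) x0 (1,0) (1,0) := dd_eq_snd hv0 (1,0) (1,0)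
      have eV12 : d2 (d1 v) x0 = fderiv ℝ (fderiv ℝ v) x0 (0,1) (1,0) := dd_eq_snd hv0 (1,0) (0,1)
      have eV22 : d2 (d2 v) x0 = fderiv ℝ (fderiv ℝ v) x0 (0,1) (0,1) := dd_eq_snd hv0 (0,1) (0,1)
      have hd11 : H11 = fderiv ℝ (fderiv ℝ u) x0 (1,0) (1,0)
          - fderiv ℝ (fderiv ℝ v) x0 (1,0) (1,0) + ε * Real.exp x0.1 := by
        have h := snd_decomp hΩopen hx0Ω hu2 hv2 ε (1,0) (1,0) hwdef
        rw [hH11, hf2, h]; norm_num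
      have hd12 : H12 = fderiv ℝ (fderiv ℝ u) x0 (0,1) (1,0)
          - fderiv ℝ (fderiv ℝ v) x0 (0,1) (1,0) := by
        have h := snd_decomp hΩopen hx0Ω hu2 hv2 ε (0,1) (1,0) hwdef
        rw [hH12, hf2, h]; norm_num
      have hd22 : H22 = fderiv ℝ (fderiv ℝ u) x0 (0,1) (0,1)
          - fderiv ℝ (fderiv ℝ v) x0 (0,1) (0,1) := by
        have h := snd_decomp hΩopen hx0Ω hu2 hv2 ε (0,1) (0,1) hwdef
        rw [hH22, hf2, h]; norm_num
      have hLuv : Lop a11 a12 a22 v x0 ≤ Lop a11 a12 a22 u x0 := hL x0 hx0Ω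
      have hexp : 0 < Real.exp x0.1 := Real.exp_pos _
      clear_value f2 H11 H12 H22 α β γ
      have hLop : α * H11 + 2 * β * H12 + γ * H22
          = Lop a11 a12 a22 u x0 - Lop a11 a12 a22 v x0 + ε * α * Real.exp x0.1 := by
        simp only [Lop, eU11, eU12, eU22, eV11, eV12, eV22, hd11, hd12, hd22, hα, hβ, hγ]
        ring
      have hpos : 0 < ε * α * Real.exp x0.1 := by positivity
      linarith only [htr, hLop, hLuv, hpos]
    -- so x0 is on the frontier
    have hx0fr : x0 ∈ frontier Ω := by
      rw [frontier, hΩopen.interior_eq]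
      exact ⟨hx0K, hx0not⟩
    have h1 : w x ≤ w x0 := hx0max (subset_closure hx)
    have h2 : u x0 - v x0 ≤ 0 := sub_nonpos.2 (hbd x0 hx0fr)
    have h3 : Real.exp x0.1 ≤ M := hRbd x0 hx0K
    have h4 : 0 < Real.exp x.1 := Real.exp_pos _
    have h5 : 0 < ε * Real.exp x.1 := mul_pos hε h4
    simp only [hwdef] at h1
    nlinarith [mul_le_mul_of_nonneg_left h3 hε.le]
  by_contra hcon
  push_neg at hcon
  have hd : 0 < u x - v x := by linarith
  have h2M : (0:ℝ) < 2 * M := by linarith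
  have hkey := key ((u x - v x) / (2 * M)) (div_pos hd h2M)
  have heq : (u x - v x) / (2 * M) * M = (u x - v x) / 2 := by
    field_simp
  rw [heq] at hkey
  linarith

end Main
end
end

section
/- Ring Condition: There exists a universal constant c > 0 such that for every y ∈ ℝ², every r > 0 and every ε ∈ (0,1), the Lebesgue measure of the ring B(y,r) \ B(y,(1−ε)r) satisfies |B(y,r) \ B(y,(1−ε)r)| ≤ c · ε · |B(y,r)|. (In particular, with ω(ε) = cε one has |B(y,r) \ B(y,(1−ε)r)| ≤ ω(ε)|B(y,r)| and ω(ε) = O(ε) as ε → 0⁺.) -/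
open MeasureTheory Real Set

noncomputable section

lemma qdist_lt_iff (x1 x2 y1 y2 ρ : ℝ) :
    qdist (x1, x2) (y1, y2) < ρ ↔
      |x1 - y1| < ρ ∧
        4 * |x2 - y2| < (ρ - |x1 - y1|) ^ 2 +
          2 * (ρ - |x1 - y1|) * Real.sqrt (x1 ^ 2 + y1 ^ 2) := by
  have hS : (0:ℝ) ≤ x1 ^ 2 + y1 ^ 2 := by positivity
  have hu : (0:ℝ) ≤ |x2 - y2| := abs_nonneg _
  have hsq : Real.sqrt (x1 ^ 2 + y1 ^ 2) ^ 2 = x1 ^ 2 + y1 ^ 2 := Real.sq_sqrt hS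
  have hs0 : 0 ≤ Real.sqrt (x1 ^ 2 + y1 ^ 2) := Real.sqrt_nonneg _
  have hs0' : 0 ≤ Real.sqrt (x1 ^ 2 + y1 ^ 2 + 4 * |x2 - y2|) := Real.sqrt_nonneg _
  have hsq' : Real.sqrt (x1 ^ 2 + y1 ^ 2 + 4 * |x2 - y2|) ^ 2
      = x1 ^ 2 + y1 ^ 2 + 4 * |x2 - y2| := Real.sq_sqrt (by linarith)
  have h1 : Real.sqrt (x1 ^ 2 + y1 ^ 2) ≤ Real.sqrt (x1 ^ 2 + y1 ^ 2 + 4 * |x2 - y2|) :=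
    Real.sqrt_le_sqrt (by linarith)
  unfold qdist
  simp only
  constructor
  · intro h
    have ht : |x1 - y1| < ρ := by linarith
    have hpos : 0 < ρ - |x1 - y1| + Real.sqrt (x1 ^ 2 + y1 ^ 2) := by linarith
    have h2 : Real.sqrt (x1 ^ 2 + y1 ^ 2 + 4 * |x2 - y2|)
        < ρ - |x1 - y1| + Real.sqrt (x1 ^ 2 + y1 ^ 2) := by linarith
    have h3 := (Real.sqrt_lt' hpos).mp h2
    exact ⟨ht, by nlinarith⟩
  · rintro ⟨ht, hub⟩
    have hpos : 0 < ρ - |x1 - y1| + Real.sqrt (x1 ^ 2 + y1 ^ 2) := by linarith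
    have h3 : x1 ^ 2 + y1 ^ 2 + 4 * |x2 - y2|
        < (ρ - |x1 - y1| + Real.sqrt (x1 ^ 2 + y1 ^ 2)) ^ 2 := by nlinarith
    have h4 := (Real.sqrt_lt' hpos).mpr h3
    linarith

lemma isOpen_Bq (y : ℝ × ℝ) (ρ : ℝ) : IsOpen (Bq y ρ) := by
  have hc : Continuous fun x : ℝ × ℝ => qdist x y := by
    unfold qdist
    fun_prop
  exact isOpen_lt hc continuous_const

set_option maxHeartbeats 1000000 in
/-- **Ring Condition** for the quasi metric balls `B(y,r)`. -/
theorem ring_condition :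
    ∃ c > (0 : ℝ), ∀ y : ℝ × ℝ, ∀ r > (0 : ℝ), ∀ ε : ℝ, 0 < ε → ε < 1 →
      volume (Bq y r \ Bq y ((1 - ε) * r)) ≤ ENNReal.ofReal (c * ε) * volume (Bq y r) := by
  refine ⟨32, by norm_num, ?_⟩
  rintro ⟨y1, y2⟩ r hr ε hε0 hε1
  set s : ℝ := (1 - ε) * r with hsdef
  have hs0 : 0 < s := mul_pos (by linarith) hr
  have hsr : s < r := by nlinarith
  have hrs : r - s = ε * r := by rw [hsdef]; ring
  have hy1 : (0:ℝ) ≤ |y1| := abs_nonneg _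
  set M : ℝ := 2 * ε * r * (r + |y1|) with hM
  have hMpos : 0 ≤ M := by positivity
  have hmB : ∀ ρ : ℝ, MeasurableSet (Bq (y1, y2) ρ) := fun ρ => (isOpen_Bq _ ρ).measurableSet
  have hmR : MeasurableSet (Bq (y1, y2) r \ Bq (y1, y2) s) := (hmB r).diff (hmB s)
  -- Upper bound on the ring via Fubini.
  have hup : volume (Bq (y1, y2) r \ Bq (y1, y2) s)
      ≤ ENNReal.ofReal (4 * ε * r ^ 2 * (r + |y1|)) := by
    rw [MeasureTheory.Measure.volume_eq_prod, MeasureTheory.Measure.prod_apply hmR]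
    have hpt : ∀ x1 : ℝ, volume (Prod.mk x1 ⁻¹' (Bq (y1, y2) r \ Bq (y1, y2) s))
        ≤ (Set.Ioo (y1 - r) (y1 + r)).indicator (fun _ => ENNReal.ofReal M) x1 := by
      intro x1
      by_cases htr : |x1 - y1| < r
      · have hxmem : x1 ∈ Set.Ioo (y1 - r) (y1 + r) := by
          rcases abs_lt.mp htr with ⟨h1, h2⟩
          exact Set.mem_Ioo.mpr ⟨by linarith, by linarith⟩
        rw [Set.indicator_of_mem hxmem]
        set σ : ℝ := Real.sqrt (x1 ^ 2 + y1 ^ 2) with hσ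
        have hσ0 : 0 ≤ σ := Real.sqrt_nonneg _
        have hσub : σ ≤ r + 2 * |y1| := by
          have h1 : σ ≤ |x1| + |y1| := by
            rw [hσ]
            have hle : x1 ^ 2 + y1 ^ 2 ≤ (|x1| + |y1|) ^ 2 := by
              nlinarith [sq_abs x1, sq_abs y1, mul_nonneg (abs_nonneg x1) (abs_nonneg y1)]
            calc Real.sqrt (x1 ^ 2 + y1 ^ 2) ≤ Real.sqrt ((|x1| + |y1|) ^ 2) :=
                  Real.sqrt_le_sqrt hle
              _ = |x1| + |y1| := Real.sqrt_sq (by positivity)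
          have h2 : |x1| ≤ |x1 - y1| + |y1| := by
            calc |x1| = |(x1 - y1) + y1| := by ring_nf
              _ ≤ |x1 - y1| + |y1| := abs_add_le _ _
          linarith
        set t : ℝ := |x1 - y1| with htdef
        have ht0 : 0 ≤ t := abs_nonneg _
        set A : ℝ := ((r - t) ^ 2 + 2 * (r - t) * σ) / 4 with hA
        set B : ℝ := if t < s then ((s - t) ^ 2 + 2 * (s - t) * σ) / 4 else 0 with hB
        have hB0 : 0 ≤ B := by
          rw [hB]; split_ifs with hts
          · nlinarith
          · exact le_refl 0
        have hBA : B ≤ A := by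
          rw [hB]; split_ifs with hts
          · nlinarith
          · nlinarith
        have hsub : Prod.mk x1 ⁻¹' (Bq (y1, y2) r \ Bq (y1, y2) s)
            ⊆ Set.Ico (y2 + B) (y2 + A) ∪ Set.Ioc (y2 - A) (y2 - B) := by
          rintro x2 ⟨hin, hout⟩
          have hin' := (qdist_lt_iff x1 x2 y1 y2 r).mp hin
          have hu1 : |x2 - y2| < A := by
            have := hin'.2
            rw [hA]; linarith
          have hu2 : B ≤ |x2 - y2| := by
            rw [hB]; split_ifs with hts
            · by_contra hlt
              push_neg at hlt
              exact hout ((qdist_lt_iff x1 x2 y1 y2 s).mpr ⟨hts, by linarith⟩)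
            · exact abs_nonneg _
          rcases le_total y2 x2 with h | h
          · left
            have habs : |x2 - y2| = x2 - y2 := abs_of_nonneg (by linarith)
            rw [habs] at hu1 hu2
            exact Set.mem_Ico.mpr ⟨by linarith, by linarith⟩
          · right
            have habs : |x2 - y2| = y2 - x2 := by
              rw [abs_of_nonpos (by linarith)]; ring
            rw [habs] at hu1 hu2
            exact Set.mem_Ioc.mpr ⟨by linarith, by linarith⟩
        have hdiff : 2 * (A - B) ≤ M := by
          rw [hA, hB]; split_ifs with hts
          · have h5 : (r - s) * σ ≤ ε * r * (r + 2 * |y1|) := by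
              rw [hrs]
              exact mul_le_mul_of_nonneg_left hσub (by positivity)
            have e1 : (r - t) ^ 2 - (s - t) ^ 2 = (r - s) * (r + s - 2 * t) := by ring
            have e2 : (r - s) * (r + s - 2 * t) ≤ (ε * r) * (2 * r) := by
              rw [hrs]
              exact mul_le_mul_of_nonneg_left (by linarith) (by positivity)
            rw [hM]
            linarith
          · push_neg at hts
            have hrt : r - t ≤ ε * r := by linarith
            have hrt0 : 0 ≤ r - t := by linarith
            have h8 : (r - t) ^ 2 ≤ (ε * r) * r := by
              calc (r - t) ^ 2 = (r - t) * (r - t) := sq (r - t)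
                _ ≤ (ε * r) * r := mul_le_mul hrt (by linarith) hrt0 (by positivity)
            have h9 : (r - t) * σ ≤ (ε * r) * (r + 2 * |y1|) :=
              mul_le_mul hrt hσub hσ0 (by positivity)
            have h10 : (0:ℝ) ≤ ε * r * r := by positivity
            rw [hM]
            linarith
        calc volume (Prod.mk x1 ⁻¹' (Bq (y1, y2) r \ Bq (y1, y2) s))
            ≤ volume (Set.Ico (y2 + B) (y2 + A) ∪ Set.Ioc (y2 - A) (y2 - B)) :=
              measure_mono hsub
          _ ≤ volume (Set.Ico (y2 + B) (y2 + A)) + volume (Set.Ioc (y2 - A) (y2 - B)) :=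
              measure_union_le _ _
          _ = ENNReal.ofReal (A - B) + ENNReal.ofReal (A - B) := by
              rw [Real.volume_Ico, Real.volume_Ioc]
              congr 1 <;> · congr 1; ring
          _ = ENNReal.ofReal ((A - B) + (A - B)) :=
              (ENNReal.ofReal_add (by linarith) (by linarith)).symm
          _ ≤ ENNReal.ofReal M := ENNReal.ofReal_le_ofReal (by linarith)
      · push_neg at htr
        have hempty : Prod.mk x1 ⁻¹' (Bq (y1, y2) r \ Bq (y1, y2) s) = ∅ := by
          ext x2
          simp only [Set.mem_preimage, Set.mem_diff, Set.mem_empty_iff_false, iff_false,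
            not_and]
          intro hin
          exact absurd ((qdist_lt_iff x1 x2 y1 y2 r).mp hin).1 (not_lt.mpr htr)
        rw [hempty, measure_empty]
        exact zero_le
    calc ∫⁻ x1, volume (Prod.mk x1 ⁻¹' (Bq (y1, y2) r \ Bq (y1, y2) s))
        ≤ ∫⁻ x1, (Set.Ioo (y1 - r) (y1 + r)).indicator (fun _ => ENNReal.ofReal M) x1 :=
          lintegral_mono hpt
      _ = ENNReal.ofReal M * volume (Set.Ioo (y1 - r) (y1 + r)) := by
          rw [lintegral_indicator measurableSet_Ioo, setLIntegral_const]
      _ = ENNReal.ofReal (4 * ε * r ^ 2 * (r + |y1|)) := by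
          rw [Real.volume_Ioo, ← ENNReal.ofReal_mul hMpos]
          congr 1
          rw [hM]; ring
  -- Lower bound on the ball: it contains a box.
  have hlow : ENNReal.ofReal (r ^ 2 * (r + |y1|) / 8) ≤ volume (Bq (y1, y2) r) := by
    set a : ℝ := r ^ 2 / 16 + r * |y1| / 4 with ha
    have ha0 : 0 < a := by positivity
    have hsubP : Set.Ioo (y1 - r / 2) (y1 + r / 2) ×ˢ Set.Ioo (y2 - a) (y2 + a)
        ⊆ Bq (y1, y2) r := by
      rintro ⟨x1, x2⟩ ⟨hx1, hx2⟩
      simp only [Set.mem_Ioo] at hx1 hx2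
      have ht : |x1 - y1| < r / 2 := abs_lt.mpr ⟨by linarith [hx1.1], by linarith [hx1.2]⟩
      have hu : |x2 - y2| < a := abs_lt.mpr ⟨by linarith [hx2.1], by linarith [hx2.2]⟩
      refine (qdist_lt_iff x1 x2 y1 y2 r).mpr ⟨by linarith, ?_⟩
      have hσlb : |y1| ≤ Real.sqrt (x1 ^ 2 + y1 ^ 2) := by
        calc |y1| = Real.sqrt (y1 ^ 2) := (Real.sqrt_sq_eq_abs y1).symm
          _ ≤ Real.sqrt (x1 ^ 2 + y1 ^ 2) := Real.sqrt_le_sqrt (by nlinarith [sq_nonneg x1])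
      have hσ0 : 0 ≤ Real.sqrt (x1 ^ 2 + y1 ^ 2) := Real.sqrt_nonneg _
      have h10 : r / 2 * |y1| ≤ (r - |x1 - y1|) * Real.sqrt (x1 ^ 2 + y1 ^ 2) :=
        mul_le_mul (by linarith) hσlb (abs_nonneg y1) (by linarith)
      have h11 : (r / 2) ^ 2 ≤ (r - |x1 - y1|) ^ 2 := by
        nlinarith [abs_nonneg (x1 - y1)]
      rw [ha] at hu
      linarith
    calc ENNReal.ofReal (r ^ 2 * (r + |y1|) / 8)
        ≤ ENNReal.ofReal (r * (2 * a)) := by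
          apply ENNReal.ofReal_le_ofReal
          rw [ha]
          nlinarith [mul_nonneg (mul_nonneg hr.le hr.le) hy1]
      _ = volume (Set.Ioo (y1 - r / 2) (y1 + r / 2) ×ˢ Set.Ioo (y2 - a) (y2 + a)) := by
          rw [MeasureTheory.Measure.volume_eq_prod, MeasureTheory.Measure.prod_prod,
            Real.volume_Ioo, Real.volume_Ioo,
            show y1 + r / 2 - (y1 - r / 2) = r by ring,
            show y2 + a - (y2 - a) = 2 * a by ring, ← ENNReal.ofReal_mul hr.le]
      _ ≤ volume (Bq (y1, y2) r) := measure_mono hsubP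
  calc volume (Bq (y1, y2) r \ Bq (y1, y2) s)
      ≤ ENNReal.ofReal (4 * ε * r ^ 2 * (r + |y1|)) := hup
    _ = ENNReal.ofReal (32 * ε) * ENNReal.ofReal (r ^ 2 * (r + |y1|) / 8) := by
        rw [← ENNReal.ofReal_mul (by positivity)]
        congr 1
        ring
    _ ≤ ENNReal.ofReal (32 * ε) * volume (Bq (y1, y2) r) := mul_le_mul_right hlow _
end
end

section
/- Second Structure Theorem: There exists a constant C > 0 such that for every y ∈ ℝ² and every r > 0 one has Box(y, C⁻¹ r) ⊂ G(y, r) ⊂ Box(y, C r). (In fact one can take the explicit inclusions Box(y, r/5) ⊂ G(y, r) ⊂ Box(y, 3r).) -/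
open MeasureTheory Real Set

noncomputable section

private lemma quarter_lt {A r : ℝ} (hA : 0 ≤ A) (hr : 0 < r) : A ^ ((1:ℝ)/4) < r ↔ A < r ^ 4 := by
  have h4 : ((r^4 : ℝ)) ^ ((1:ℝ)/4) = r := by
    rw [← Real.rpow_natCast r 4, ← Real.rpow_mul hr.le]; norm_num
  nth_rewrite 1 [← h4]
  exact Real.rpow_lt_rpow_iff hA (by positivity) (by norm_num)

private lemma quarter_sq {A : ℝ} (hA : 0 ≤ A) : (A ^ ((1:ℝ)/4)) ^ 2 = A ^ ((1:ℝ)/2) := by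
  rw [← Real.rpow_natCast (A ^ ((1:ℝ)/4)) 2, ← Real.rpow_mul hA]; norm_num

private lemma half_lt {A s : ℝ} (hA : 0 ≤ A) (hs : 0 < s) : A ^ ((1:ℝ)/2) < s ↔ A < s ^ 2 := by
  have h2 : ((s^2 : ℝ)) ^ ((1:ℝ)/2) = s := by
    rw [← Real.rpow_natCast s 2, ← Real.rpow_mul hs.le]; norm_num
  nth_rewrite 1 [← h2]
  exact Real.rpow_lt_rpow_iff hA (by positivity) (by norm_num)

set_option maxHeartbeats 1000000 in
private lemma incl_left (y : ℝ × ℝ) {r : ℝ} (hr : 0 < r) : Box y (r/5) ⊆ Gset y r := by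
  rintro x ⟨h1, h2⟩
  have hA : (0:ℝ) ≤ (x.1 ^ 2 - y.1 ^ 2) ^ 2 + 4 * (x.2 - y.2) ^ 2 := by positivity
  have hd := abs_lt.1 h1
  have hm0 : (0:ℝ) ≤ |y.1| := abs_nonneg _
  have hmsq : y.1 ^ 2 = |y.1| ^ 2 := (sq_abs _).symm
  have hdsq : (x.1 - y.1) ^ 2 < (r/5) ^ 2 := by nlinarith [hd.1, hd.2]
  have hsum : (x.1 + y.1) ^ 2 ≤ 2*(x.1 - y.1)^2 + 8 * y.1^2 := by
    nlinarith [sq_nonneg (x.1 - 3*y.1)]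
  rcases lt_or_ge |y.1| r with hy | hy
  · left
    refine ⟨hy, ?_⟩
    rw [grho, quarter_lt hA hr]
    have hbsq : y.1 ^ 2 < r ^ 2 := by
      have := abs_lt.1 hy; nlinarith
    have h' : (x.1 + y.1) ^ 2 < 2*(r/5)^2 + 8 * r^2 := by nlinarith
    have hprod : (x.1 - y.1) ^ 2 * (x.1 + y.1) ^ 2 < (r/5)^2 * (2*(r/5)^2 + 8*r^2) := by
      calc (x.1 - y.1) ^ 2 * (x.1 + y.1) ^ 2
          ≤ (x.1 - y.1) ^ 2 * (2*(r/5)^2 + 8*r^2) :=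
            mul_le_mul_of_nonneg_left h'.le (sq_nonneg _)
        _ < (r/5)^2 * (2*(r/5)^2 + 8*r^2) := by
            apply mul_lt_mul_of_pos_right hdsq; positivity
    have hy5 : r/5*(|y.1| + r/5) < r/5*(r + r/5) := by nlinarith
    have h2' : |x.2 - y.2| < r/5*(r + r/5) := h2.trans hy5
    have h2sq : (x.2 - y.2) ^ 2 < (r/5*(r + r/5)) ^ 2 := by
      rw [← sq_abs]; exact pow_lt_pow_left₀ h2' (abs_nonneg _) (by norm_num)
    nlinarith [hprod, h2sq, pow_pos hr 4]
  · right
    have hm : 0 < |y.1| := lt_of_lt_of_le hr hy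
    refine ⟨hy, ?_, ?_⟩
    · rcases le_or_gt 0 y.1 with h | h
      · have hry : r ≤ y.1 := by rwa [abs_of_nonneg h] at hy
        have : 0 ≤ x.1 := by nlinarith [hd.1]
        exact mul_nonneg this (le_trans hr.le hry)
      · have hy' : r ≤ -y.1 := by rwa [abs_of_neg h] at hy
        have hx1 : x.1 ≤ 0 := by linarith [hd.2]
        have := mul_nonneg (neg_nonneg.2 hx1) (neg_nonneg.2 h.le)
        linarith
    · rw [grho, quarter_sq hA, div_lt_iff₀ hm, half_lt hA (by positivity)]
      have hrsq : r ^ 2 ≤ |y.1| ^ 2 := by nlinarith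
      have h' : (x.1 + y.1) ^ 2 < 2*(r/5)^2 + 8 * |y.1|^2 := by nlinarith
      have hprod : (x.1 - y.1) ^ 2 * (x.1 + y.1) ^ 2 < (r/5)^2 * (2*(r/5)^2 + 8*|y.1|^2) := by
        calc (x.1 - y.1) ^ 2 * (x.1 + y.1) ^ 2
            ≤ (x.1 - y.1) ^ 2 * (2*(r/5)^2 + 8*|y.1|^2) :=
              mul_le_mul_of_nonneg_left h'.le (sq_nonneg _)
          _ < (r/5)^2 * (2*(r/5)^2 + 8*|y.1|^2) := by
              apply mul_lt_mul_of_pos_right hdsq; positivity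
      have hy5 : r/5*(|y.1| + r/5) ≤ r/5*(6*|y.1|/5) := by nlinarith
      have h2' : |x.2 - y.2| < r/5*(6*|y.1|/5) := h2.trans_le hy5
      have h2sq : (x.2 - y.2) ^ 2 < (r/5*(6*|y.1|/5)) ^ 2 := by
        rw [← sq_abs]; exact pow_lt_pow_left₀ h2' (abs_nonneg _) (by norm_num)
      have h4 : r^2 * r^2 ≤ r^2 * |y.1|^2 :=
        mul_le_mul_of_nonneg_left hrsq (by positivity)
      nlinarith [hprod, h2sq, h4, mul_pos (pow_pos hr 2) (pow_pos hm 2)]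

set_option maxHeartbeats 1000000 in
private lemma incl_right (y : ℝ × ℝ) {r : ℝ} (hr : 0 < r) : Gset y r ⊆ Box y (3*r) := by
  rintro x (⟨hy, hρ⟩ | ⟨hy, hsgn, hρ⟩)
  · have hA : (0:ℝ) ≤ (x.1 ^ 2 - y.1 ^ 2) ^ 2 + 4 * (x.2 - y.2) ^ 2 := by positivity
    rw [grho, quarter_lt hA hr] at hρ
    have hbsq : y.1 ^ 2 < r ^ 2 := by
      rw [← sq_abs]; exact pow_lt_pow_left₀ hy (abs_nonneg _) (by norm_num)
    have hab : |x.1 ^ 2 - y.1 ^ 2| < r ^ 2 := by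
      apply abs_lt_of_sq_lt_sq _ (by positivity)
      nlinarith [sq_nonneg (x.2 - y.2)]
    have hx1 : x.1 ^ 2 < 2 * r ^ 2 := by
      have := abs_lt.1 hab; nlinarith
    constructor
    · apply abs_lt_of_sq_lt_sq _ (by positivity)
      nlinarith
    · apply abs_lt_of_sq_lt_sq _ (by positivity)
      have hu : (x.2 - y.2) ^ 2 < r ^ 4 / 4 := by nlinarith [sq_nonneg (x.1 ^ 2 - y.1 ^ 2)]
      nlinarith [hu, abs_nonneg y.1, pow_pos hr 4, sq_nonneg (|y.1|),
        mul_nonneg (abs_nonneg y.1) hr.le, sq_nonneg (|y.1| * r),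
        mul_nonneg (mul_nonneg (mul_nonneg hr.le hr.le) hr.le) (abs_nonneg y.1)]
  · have hA : (0:ℝ) ≤ (x.1 ^ 2 - y.1 ^ 2) ^ 2 + 4 * (x.2 - y.2) ^ 2 := by positivity
    have hm : 0 < |y.1| := lt_of_lt_of_le hr hy
    rw [grho, quarter_sq hA, div_lt_iff₀ hm, half_lt hA (by positivity)] at hρ
    have hmsq : y.1 ^ 2 = |y.1| ^ 2 := (sq_abs _).symm
    have hplus : |y.1| ^ 2 ≤ (x.1 + y.1) ^ 2 := by
      rw [← hmsq]; nlinarith [sq_nonneg x.1]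
    have hkey : (x.1 - y.1) ^ 2 * |y.1| ^ 2 < r ^ 2 * |y.1| ^ 2 := by
      calc (x.1 - y.1) ^ 2 * |y.1| ^ 2 ≤ (x.1 - y.1) ^ 2 * (x.1 + y.1) ^ 2 :=
            mul_le_mul_of_nonneg_left hplus (sq_nonneg _)
      _ < r ^ 2 * |y.1| ^ 2 := by nlinarith [sq_nonneg (x.2 - y.2)]
    have h1 : (x.1 - y.1) ^ 2 < r ^ 2 :=
      lt_of_mul_lt_mul_right hkey (by positivity)
    constructor
    · apply abs_lt_of_sq_lt_sq _ (by positivity)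
      nlinarith
    · apply abs_lt_of_sq_lt_sq _ (by positivity)
      have hu : (x.2 - y.2) ^ 2 < (r * |y.1|) ^ 2 / 4 := by
        nlinarith [sq_nonneg (x.1 ^ 2 - y.1 ^ 2)]
      nlinarith [hu, hm, hr, mul_pos hr hm, sq_nonneg (r * |y.1|),
        mul_nonneg (mul_nonneg (mul_nonneg hr.le hr.le) hr.le) (abs_nonneg y.1),
        pow_pos hr 4]

private lemma box_mono (y : ℝ × ℝ) {s t : ℝ} (h0 : 0 ≤ s) (hst : s ≤ t) :
    Box y s ⊆ Box y t := by
  rintro x ⟨h1, h2⟩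
  refine ⟨h1.trans_le hst, h2.trans_le ?_⟩
  nlinarith [abs_nonneg y.1]

/-- **Second Structure Theorem**: the sublevel sets `G(y,r)` are comparable to
the boxes `Box(y,r)`; in fact `Box(y,r/5) ⊆ G(y,r) ⊆ Box(y,3r)`. -/
theorem second_structure_theorem :
    (∃ C > (0 : ℝ), ∀ y : ℝ × ℝ, ∀ r > (0 : ℝ),
      Box y (C⁻¹ * r) ⊆ Gset y r ∧ Gset y r ⊆ Box y (C * r)) ∧
    (∀ y : ℝ × ℝ, ∀ r > (0 : ℝ),
      Box y (r / 5) ⊆ Gset y r ∧ Gset y r ⊆ Box y (3 * r)) := by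
  constructor
  · refine ⟨5, by norm_num, fun y r hr => ⟨?_, ?_⟩⟩
    · rw [show (5:ℝ)⁻¹ * r = r / 5 by ring]
      exact incl_left y hr
    · exact (incl_right y hr).trans (box_mono y (by linarith) (by linarith))
  · exact fun y r hr => ⟨incl_left y hr, incl_right y hr⟩
end
end

section
/- Barrier lemma: Let y = (y1, 0) ∈ ℝ² be fixed, let α ≤ 2 − 3Λ/λ, and define φ(x) = ρ(x,y)^α on the open set {x ∈ ℝ² : ρ(x,y) > 0}. Then φ is twice continuously differentiable on {ρ(·,y) > 0} and Lφ(x) ≥ 0 for every x with ρ(x,y) > 0, for every choice of coefficients a11, a12, a22 satisfying the uniform ellipticity condition with constants λ, Λ. -/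
open MeasureTheory Real Set

noncomputable section

-- ===== auxiliary definitions and lemmas for the barrier lemma =====

/-- The fourth power of the gauge, centered at `(y1, 0)`. -/
def Wf (y1 : ℝ) (x : ℝ × ℝ) : ℝ := (x.1 ^ 2 - y1 ^ 2) ^ 2 + 4 * x.2 ^ 2

/-- The total derivative of `Wf y1`. -/
def DWf (y1 : ℝ) (x : ℝ × ℝ) : ℝ × ℝ →L[ℝ] ℝ :=
  (4 * (x.1 ^ 2 - y1 ^ 2) * x.1) • ContinuousLinearMap.fst ℝ ℝ ℝ
    + (8 * x.2) • ContinuousLinearMap.snd ℝ ℝ ℝ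

lemma Wf_nonneg (y1 : ℝ) (x : ℝ × ℝ) : 0 ≤ Wf y1 x := by unfold Wf; positivity

lemma hasFDerivAt_Wf (y1 : ℝ) (x : ℝ × ℝ) : HasFDerivAt (Wf y1) (DWf y1 x) x := by
  have h1 : HasFDerivAt (fun z : ℝ × ℝ => z.1) (ContinuousLinearMap.fst ℝ ℝ ℝ) x :=
    hasFDerivAt_fst
  have h2 : HasFDerivAt (fun z : ℝ × ℝ => z.2) (ContinuousLinearMap.snd ℝ ℝ ℝ) x :=
    hasFDerivAt_snd
  have hWalt : Wf y1 = fun z : ℝ × ℝ => (z.1*z.1 - y1^2)*(z.1*z.1 - y1^2) + 4*(z.2*z.2) := by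
    funext z; simp only [Wf]; ring
  rw [hWalt]
  have h := (((h1.mul h1).sub_const (y1^2)).mul ((h1.mul h1).sub_const (y1^2))).add
    ((h2.mul h2).const_mul 4)
  refine h.congr_fderiv ?_
  refine ContinuousLinearMap.ext fun v => ?_
  simp only [DWf, ContinuousLinearMap.add_apply, ContinuousLinearMap.coe_smul',
    Pi.smul_apply, ContinuousLinearMap.coe_fst', ContinuousLinearMap.coe_snd', smul_eq_mul, Pi.mul_apply]
  ring

lemma hasFDerivAt_Wq (y1 q : ℝ) (x : ℝ × ℝ) (hx : Wf y1 x ≠ 0) :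
    HasFDerivAt (fun z => Wf y1 z ^ q) ((q * Wf y1 x ^ (q - 1)) • DWf y1 x) x :=
  (Real.hasDerivAt_rpow_const (Or.inl hx)).comp_hasFDerivAt x (hasFDerivAt_Wf y1 x)

lemma hasFDerivAt_cube (y1 : ℝ) (x : ℝ × ℝ) :
    HasFDerivAt (fun z : ℝ × ℝ => (z.1 ^ 2 - y1 ^ 2) * z.1)
      ((3 * x.1 ^ 2 - y1 ^ 2) • ContinuousLinearMap.fst ℝ ℝ ℝ) x := by
  have h1 : HasFDerivAt (fun z : ℝ × ℝ => z.1) (ContinuousLinearMap.fst ℝ ℝ ℝ) x :=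
    hasFDerivAt_fst
  have heq : (fun z : ℝ × ℝ => (z.1 ^ 2 - y1 ^ 2) * z.1)
      = fun z : ℝ × ℝ => (z.1*z.1 - y1^2)*z.1 := by
    funext z; ring
  rw [heq]
  have h := ((h1.mul h1).sub_const (y1^2)).mul h1
  refine h.congr_fderiv ?_
  refine ContinuousLinearMap.ext fun v => ?_
  simp
  ring

lemma isOpen_Wf_pos (y1 : ℝ) : IsOpen {z : ℝ × ℝ | 0 < Wf y1 z} := by
  have : Continuous (Wf y1) := by unfold Wf; fun_prop
  exact isOpen_lt continuous_const this

lemma d1_Wq_eqOn (y1 q : ℝ) (z : ℝ × ℝ) (hz : 0 < Wf y1 z) :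
    d1 (fun z => Wf y1 z ^ q) z
      = (4*q) * (Wf y1 z ^ (q-1) * ((z.1^2 - y1^2)*z.1)) := by
  unfold d1
  rw [(hasFDerivAt_Wq y1 q z (ne_of_gt hz)).fderiv]
  simp only [DWf, ContinuousLinearMap.add_apply, ContinuousLinearMap.coe_smul',
    Pi.smul_apply, ContinuousLinearMap.coe_fst', ContinuousLinearMap.coe_snd', smul_eq_mul]
  ring

lemma d2_Wq_eqOn (y1 q : ℝ) (z : ℝ × ℝ) (hz : 0 < Wf y1 z) :
    d2 (fun z => Wf y1 z ^ q) z = (8*q) * (Wf y1 z ^ (q-1) * z.2) := by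
  unfold d2
  rw [(hasFDerivAt_Wq y1 q z (ne_of_gt hz)).fderiv]
  simp only [DWf, ContinuousLinearMap.add_apply, ContinuousLinearMap.coe_smul',
    Pi.smul_apply, ContinuousLinearMap.coe_fst', ContinuousLinearMap.coe_snd', smul_eq_mul]
  ring

lemma hasFDerivAt_g1 (y1 q : ℝ) (x : ℝ × ℝ) (hx : 0 < Wf y1 x) :
    HasFDerivAt (fun z : ℝ × ℝ => (4*q) * (Wf y1 z ^ (q-1) * ((z.1^2 - y1^2)*z.1)))
      ((4*q) • ((Wf y1 x ^ (q-1)) • ((3 * x.1 ^ 2 - y1 ^ 2) • ContinuousLinearMap.fst ℝ ℝ ℝ)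
        + (((x.1^2 - y1^2)*x.1)) • (((q-1) * Wf y1 x ^ (q-1-1)) • DWf y1 x))) x :=
  ((hasFDerivAt_Wq y1 (q-1) x (ne_of_gt hx)).mul (hasFDerivAt_cube y1 x)).const_mul (4*q)

lemma hasFDerivAt_g2 (y1 q : ℝ) (x : ℝ × ℝ) (hx : 0 < Wf y1 x) :
    HasFDerivAt (fun z : ℝ × ℝ => (8*q) * (Wf y1 z ^ (q-1) * z.2))
      ((8*q) • ((Wf y1 x ^ (q-1)) • ContinuousLinearMap.snd ℝ ℝ ℝ
        + (x.2) • (((q-1) * Wf y1 x ^ (q-1-1)) • DWf y1 x))) x :=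
  ((hasFDerivAt_Wq y1 (q-1) x (ne_of_gt hx)).mul hasFDerivAt_snd).const_mul (8*q)

lemma d1ev (y1 q : ℝ) : ∀ z ∈ {z : ℝ × ℝ | 0 < Wf y1 z},
    d1 (fun z => Wf y1 z ^ q) z = (4*q) * (Wf y1 z ^ (q-1) * ((z.1^2 - y1^2)*z.1)) :=
  fun z hz => d1_Wq_eqOn y1 q z hz

lemma d2ev (y1 q : ℝ) : ∀ z ∈ {z : ℝ × ℝ | 0 < Wf y1 z},
    d2 (fun z => Wf y1 z ^ q) z = (8*q) * (Wf y1 z ^ (q-1) * z.2) :=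
  fun z hz => d2_Wq_eqOn y1 q z hz

lemma d11_eq (y1 q : ℝ) (x : ℝ × ℝ) (hx : 0 < Wf y1 x) :
    d1 (d1 (fun z => Wf y1 z ^ q)) x
      = 4*q*((Wf y1 x ^ (q-1))*(3*x.1^2 - y1^2)
          + ((x.1^2 - y1^2)*x.1) * ((q-1)*Wf y1 x ^ (q-2)) * (4*(x.1^2-y1^2)*x.1)) := by
  have hev : d1 (fun z => Wf y1 z ^ q)
      =ᶠ[nhds x] fun z => (4*q) * (Wf y1 z ^ (q-1) * ((z.1^2 - y1^2)*z.1)) :=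
    Filter.eventuallyEq_of_mem ((isOpen_Wf_pos y1).mem_nhds hx) (d1ev y1 q)
  show (fderiv ℝ (d1 fun z => Wf y1 z ^ q) x) (1,0) = _
  rw [hev.fderiv_eq, (hasFDerivAt_g1 y1 q x hx).fderiv]
  have h2 : q - 1 - 1 = q - 2 := by ring
  rw [h2]
  simp only [DWf, ContinuousLinearMap.add_apply, ContinuousLinearMap.coe_smul',
    Pi.smul_apply, ContinuousLinearMap.coe_fst', ContinuousLinearMap.coe_snd', smul_eq_mul]
  ring

lemma d21_eq (y1 q : ℝ) (x : ℝ × ℝ) (hx : 0 < Wf y1 x) :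
    d2 (d1 (fun z => Wf y1 z ^ q)) x
      = 4*q*(((x.1^2 - y1^2)*x.1) * ((q-1)*Wf y1 x ^ (q-2)) * (8*x.2)) := by
  have hev : d1 (fun z => Wf y1 z ^ q)
      =ᶠ[nhds x] fun z => (4*q) * (Wf y1 z ^ (q-1) * ((z.1^2 - y1^2)*z.1)) :=
    Filter.eventuallyEq_of_mem ((isOpen_Wf_pos y1).mem_nhds hx) (d1ev y1 q)
  show (fderiv ℝ (d1 fun z => Wf y1 z ^ q) x) (0,1) = _
  rw [hev.fderiv_eq, (hasFDerivAt_g1 y1 q x hx).fderiv]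
  have h2 : q - 1 - 1 = q - 2 := by ring
  rw [h2]
  simp only [DWf, ContinuousLinearMap.add_apply, ContinuousLinearMap.coe_smul',
    Pi.smul_apply, ContinuousLinearMap.coe_fst', ContinuousLinearMap.coe_snd', smul_eq_mul]
  ring

lemma d22_eq (y1 q : ℝ) (x : ℝ × ℝ) (hx : 0 < Wf y1 x) :
    d2 (d2 (fun z => Wf y1 z ^ q)) x
      = 8*q*((Wf y1 x ^ (q-1)) + x.2 * ((q-1)*Wf y1 x ^ (q-2)) * (8*x.2)) := by
  have hev : d2 (fun z => Wf y1 z ^ q)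
      =ᶠ[nhds x] fun z => (8*q) * (Wf y1 z ^ (q-1) * z.2) :=
    Filter.eventuallyEq_of_mem ((isOpen_Wf_pos y1).mem_nhds hx) (d2ev y1 q)
  show (fderiv ℝ (d2 fun z => Wf y1 z ^ q) x) (0,1) = _
  rw [hev.fderiv_eq, (hasFDerivAt_g2 y1 q x hx).fderiv]
  have h2 : q - 1 - 1 = q - 2 := by ring
  rw [h2]
  simp only [DWf, ContinuousLinearMap.add_apply, ContinuousLinearMap.coe_smul',
    Pi.smul_apply, ContinuousLinearMap.coe_fst', ContinuousLinearMap.coe_snd', smul_eq_mul]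
  ring

lemma grho_eq_Wf (y1 : ℝ) (x : ℝ × ℝ) :
    grho x (y1, 0) = Wf y1 x ^ ((1:ℝ)/4) := by
  simp [grho, Wf]

lemma grho_pos_iff (y1 : ℝ) (x : ℝ × ℝ) :
    0 < grho x (y1, 0) ↔ 0 < Wf y1 x := by
  rw [grho_eq_Wf]
  constructor
  · intro h
    rcases lt_or_eq_of_le (Wf_nonneg y1 x) with h' | h'
    · exact h'
    · exfalso
      rw [← h', Real.zero_rpow (by norm_num : (1:ℝ)/4 ≠ 0)] at h
      exact lt_irrefl 0 h
  · intro h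
    exact Real.rpow_pos_of_pos h _

set_option maxHeartbeats 2000000 in
/-- **Barrier lemma**: for `y = (y₁,0)` and `α ≤ 2 − 3Λ/λ`, the function
`φ = ρ(·,y)^α` is `C²` and satisfies `Lφ ≥ 0` on `{ρ(·,y) > 0}`. -/
theorem barrier_lemma (lam Lam : ℝ) (hlam : 0 < lam) (hLam : lam ≤ Lam)
    (y1 : ℝ) (α : ℝ) (hα : α ≤ 2 - 3 * Lam / lam) :
    ContDiffOn ℝ 2 (fun x : ℝ × ℝ => grho x (y1, 0) ^ α)
      {x : ℝ × ℝ | 0 < grho x (y1, 0)} ∧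
    ∀ a11 a12 a22 : ℝ × ℝ → ℝ, IsElliptic lam Lam a11 a12 a22 →
      ∀ x : ℝ × ℝ, 0 < grho x (y1, 0) →
        0 ≤ Lop a11 a12 a22 (fun x : ℝ × ℝ => grho x (y1, 0) ^ α) x := by
  have hfun : (fun x : ℝ × ℝ => grho x (y1, 0) ^ α) = fun x => Wf y1 x ^ (α/4) := by
    funext x
    rw [grho_eq_Wf, ← Real.rpow_mul (Wf_nonneg y1 x)]
    congr 1
    ring
  have hset : {x : ℝ × ℝ | 0 < grho x (y1, 0)} = {x : ℝ × ℝ | 0 < Wf y1 x} := by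
    ext x; exact grho_pos_iff y1 x
  have ht : 1 ≤ Lam / lam := (one_le_div hlam).2 hLam
  have h3 : 3 * Lam / lam = 3 * (Lam / lam) := mul_div_assoc 3 Lam lam
  have hα1 : α ≤ -1 := by linarith
  have h5 : 3 * Lam / lam * lam = 3 * Lam := div_mul_cancel₀ _ (ne_of_gt hlam)
  have hαlam : (α - 2) * lam ≤ -3 * Lam := by
    have h6 := mul_le_mul_of_nonneg_right (show α - 2 ≤ -(3*Lam/lam) by linarith) hlam.le
    nlinarith [h6, h5]
  constructor
  · rw [hfun, hset]
    intro x hx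
    have hW2 : ContDiffAt ℝ 2 (Wf y1) x := by
      apply ContDiff.contDiffAt
      unfold Wf
      fun_prop
    exact ((Real.contDiffAt_rpow_const_of_ne (ne_of_gt hx)).comp x hW2).contDiffWithinAt
  · rw [hfun]
    intro a11 a12 a22 hell x hx
    have hxW : 0 < Wf y1 x := (grho_pos_iff y1 x).1 hx
    have e11 := d11_eq y1 (α/4) x hxW
    have e21 := d21_eq y1 (α/4) x hxW
    have e22 := d22_eq y1 (α/4) x hxW
    have hB : Wf y1 x ^ (α/4 - 1) = Wf y1 x ^ (α/4 - 2) * Wf y1 x := by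
      rw [show α/4 - 1 = (α/4 - 2) + 1 by ring, Real.rpow_add hxW, Real.rpow_one]
    have hA : 0 < Wf y1 x ^ (α/4 - 2) := Real.rpow_pos_of_pos hxW _
    have h10 : lam * ((1:ℝ)^2 + 0^2) ≤ a11 x * 1^2 + 2*a12 x*1*0 + a22 x*0^2 ∧
        a11 x * 1^2 + 2*a12 x*1*0 + a22 x*0^2 ≤ Lam * ((1:ℝ)^2 + 0^2) := hell x (1,0)
    have h1l : lam ≤ a11 x := by have h := h10.1; norm_num at h; linarith
    have h1r : a11 x ≤ Lam := by have h := h10.2; norm_num at h; linarith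
    have hQ : lam * ((x.1^2 - y1^2)^2 + (2*x.2)^2)
        ≤ a11 x * (x.1^2 - y1^2)^2 + 2*a12 x*(x.1^2 - y1^2)*(2*x.2) + a22 x*(2*x.2)^2 :=
      (hell x (x.1^2 - y1^2, 2*x.2)).1
    have hQ' : a11 x * (2*x.2)^2 + 2*a12 x*(2*x.2)*(-(x.1^2 - y1^2)) + a22 x*(-(x.1^2 - y1^2))^2
        ≤ Lam * ((2*x.2)^2 + (-(x.1^2 - y1^2))^2) := (hell x (2*x.2, -(x.1^2 - y1^2))).2
    have hs : (0:ℝ) ≤ x.1^2 := sq_nonneg x.1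
    have hus : x.1^2 - y1^2 ≤ x.1^2 := by linarith [sq_nonneg y1]
    have hWexp : Wf y1 x = (x.1^2 - y1^2)^2 + (2*x.2)^2 := by unfold Wf; ring
    have hX : (α-4)*x.1^2*(a11 x * (x.1^2 - y1^2)^2 + 2*a12 x*(x.1^2-y1^2)*(2*x.2)
            + a22 x*(2*x.2)^2)
        + Wf y1 x * (a11 x * (x.1^2 - y1^2) + 2*(a11 x + a22 x)*x.1^2) ≤ 0 := by
      rw [hWexp]
      have hcoef : (α-2)*x.1^2 ≤ 0 := mul_nonpos_of_nonpos_of_nonneg (by linarith) hs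
      have step1 := mul_le_mul_of_nonpos_left hQ hcoef
      have step2 := mul_le_mul_of_nonneg_left hQ' (show (0:ℝ) ≤ 2*x.1^2 by positivity)
      have t3 : a11 x * (x.1^2 - y1^2) ≤ Lam * x.1^2 := by
        rcases le_or_gt (x.1^2 - y1^2) 0 with h | h
        · have h7 : a11 x * (x.1^2 - y1^2) ≤ 0 :=
            mul_nonpos_of_nonneg_of_nonpos (by linarith) h
          have h8 : 0 ≤ Lam * x.1^2 := mul_nonneg (by linarith) hs
          linarith
        · have h7 : a11 x * (x.1^2 - y1^2) ≤ Lam * (x.1^2 - y1^2) :=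
            mul_le_mul_of_nonneg_right h1r h.le
          have h8 : Lam * (x.1^2 - y1^2) ≤ Lam * x.1^2 :=
            mul_le_mul_of_nonneg_left hus (by linarith)
          linarith
      have step3 := mul_le_mul_of_nonneg_left t3
        (show (0:ℝ) ≤ (x.1^2-y1^2)^2 + (2*x.2)^2 by positivity)
      have hsW : (0:ℝ) ≤ x.1^2 * ((x.1^2 - y1^2)^2 + (2*x.2)^2) := by positivity
      have step5 := mul_le_mul_of_nonneg_right hαlam hsW
      linarith [step1, step2, step3, step5]
    have hfin : 0 ≤ α * ((α-4)*x.1^2*(a11 x * (x.1^2 - y1^2)^2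
            + 2*a12 x*(x.1^2-y1^2)*(2*x.2) + a22 x*(2*x.2)^2)
        + Wf y1 x * (a11 x * (x.1^2 - y1^2) + 2*(a11 x + a22 x)*x.1^2)) := by
      have h9 := mul_nonneg (show (0:ℝ) ≤ -α by linarith)
        (show (0:ℝ) ≤ -((α-4)*x.1^2*(a11 x * (x.1^2 - y1^2)^2
            + 2*a12 x*(x.1^2-y1^2)*(2*x.2) + a22 x*(2*x.2)^2)
          + Wf y1 x * (a11 x * (x.1^2 - y1^2) + 2*(a11 x + a22 x)*x.1^2)) by linarith)
      linarith [h9]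
    calc (0:ℝ)
        ≤ (α * ((α-4)*x.1^2*(a11 x * (x.1^2 - y1^2)^2
              + 2*a12 x*(x.1^2-y1^2)*(2*x.2) + a22 x*(2*x.2)^2)
          + Wf y1 x * (a11 x * (x.1^2 - y1^2) + 2*(a11 x + a22 x)*x.1^2)))
            * (Wf y1 x ^ (α/4 - 2)) := mul_nonneg hfin hA.le
      _ = Lop a11 a12 a22 (fun z => Wf y1 z ^ (α/4)) x := by
          simp only [Lop]
          rw [e11, e21, e22, hB]
          ring
end
end

section
/- Existence of a global barrier: There exist positive constants C > 0 and M > 1, depending only on λ and Λ, such that for every y = (y1, 0) ∈ ℝ² and every r > 0 there exist a C² function φ̃ : ℝ² → ℝ and a continuous function ζ : ℝ² → [0,1] with support contained in the closure of G̃(y,r), satisfying: (i) φ̃ ≥ 0 on ℝ² \ G̃(y,2r); (ii) φ̃ ≤ −2 on G̃(y,r); (iii) φ̃ ≥ −M on ℝ²; and (iv) Lφ̃(x) ≤ C · x1² · ζ(x) / ( r² (r+|y1|)² ) for every x ∈ ℝ², for every choice of coefficients a11, a12, a22 satisfying the uniform ellipticity condition with constants λ, Λ. -/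
open MeasureTheory Real Set

noncomputable section

def Tf (q k : ℝ) : ℝ × ℝ → ℝ := fun x => (x.1*x.1 - q)*(x.1*x.1 - q)/4 + x.2*x.2 + k

lemma Tpos (q k : ℝ) (hk : 0 < k) (x : ℝ × ℝ) : 0 < Tf q k x := by
  have h1 := mul_self_nonneg (x.1*x.1 - q)
  have h2 := mul_self_nonneg x.2
  simp only [Tf]; linarith

lemma hasT (q k : ℝ) (x : ℝ × ℝ) :
    HasFDerivAt (Tf q k)
      (((x.1*x.1-q)*x.1) • ContinuousLinearMap.fst ℝ ℝ ℝ
        + (2*x.2) • ContinuousLinearMap.snd ℝ ℝ ℝ) x := by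
  have h1 : HasFDerivAt (fun x : ℝ × ℝ => x.1) (ContinuousLinearMap.fst ℝ ℝ ℝ) x :=
    hasFDerivAt_fst
  have h2 : HasFDerivAt (fun x : ℝ × ℝ => x.2) (ContinuousLinearMap.snd ℝ ℝ ℝ) x :=
    hasFDerivAt_snd
  have hsq := (h1.mul h1).sub_const q
  have h3 := (((hsq.mul hsq).mul_const (1/4 : ℝ)).add ((h2.mul h2).add_const k))
  have he : Tf q k = fun x : ℝ × ℝ => (x.1*x.1-q)*(x.1*x.1-q)*(1/4) + (x.2*x.2 + k) := by
    funext z; simp only [Tf]; ring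
  rw [he]
  refine h3.congr_fderiv ?_
  ext v
  · simp; ring
  · simp; ring

lemma d1_phi (q k A B e : ℝ) (hk : 0 < k) :
    d1 (fun x => A - B * (Tf q k x) ^ e)
      = fun x => (-(B*e)) * (Tf q k x) ^ (e-1) * ((x.1*x.1-q)*x.1) := by
  funext x
  have hT := hasT q k x
  have h := ((hT.rpow_const (p := e) (Or.inl (Tpos q k hk x).ne')).const_mul B).const_sub A
  rw [d1, h.fderiv]
  simp
  ring

lemma d2_phi (q k A B e : ℝ) (hk : 0 < k) :
    d2 (fun x => A - B * (Tf q k x) ^ e)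
      = fun x => (-(B*e)) * (Tf q k x) ^ (e-1) * (2*x.2) := by
  funext x
  have hT := hasT q k x
  have h := ((hT.rpow_const (p := e) (Or.inl (Tpos q k hk x).ne')).const_mul B).const_sub A
  rw [d2, h.fderiv]
  simp
  ring

lemma d1_psi1 (q k e c : ℝ) (hk : 0 < k) :
    d1 (fun x => c * (Tf q k x) ^ e * ((x.1*x.1-q)*x.1))
      = fun x => c*e*(Tf q k x)^(e-1)*((x.1*x.1-q)*x.1)*((x.1*x.1-q)*x.1)
          + c*(Tf q k x)^e*(3*(x.1*x.1) - q) := by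
  funext x
  have hT := hasT q k x
  have h1 : HasFDerivAt (fun x : ℝ × ℝ => x.1) (ContinuousLinearMap.fst ℝ ℝ ℝ) x :=
    hasFDerivAt_fst
  have hP := ((h1.mul h1).sub_const q).mul h1
  have h : HasFDerivAt (fun x => c * (Tf q k x) ^ e * ((x.1*x.1-q)*x.1)) _ x :=
    ((hT.rpow_const (p := e) (Or.inl (Tpos q k hk x).ne')).const_mul c).mul hP
  rw [d1, h.fderiv]
  simp
  ring

lemma d2_psi1 (q k e c : ℝ) (hk : 0 < k) :
    d2 (fun x => c * (Tf q k x) ^ e * ((x.1*x.1-q)*x.1))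
      = fun x => c*e*(Tf q k x)^(e-1)*(2*x.2)*((x.1*x.1-q)*x.1) := by
  funext x
  have hT := hasT q k x
  have h1 : HasFDerivAt (fun x : ℝ × ℝ => x.1) (ContinuousLinearMap.fst ℝ ℝ ℝ) x :=
    hasFDerivAt_fst
  have hP := ((h1.mul h1).sub_const q).mul h1
  have h : HasFDerivAt (fun x => c * (Tf q k x) ^ e * ((x.1*x.1-q)*x.1)) _ x :=
    ((hT.rpow_const (p := e) (Or.inl (Tpos q k hk x).ne')).const_mul c).mul hP
  rw [d2, h.fderiv]
  simp
  ring

lemma d2_psi2 (q k e c : ℝ) (hk : 0 < k) :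
    d2 (fun x => c * (Tf q k x) ^ e * (2*x.2))
      = fun x => c*e*(Tf q k x)^(e-1)*(2*x.2)*(2*x.2) + c*(Tf q k x)^e*2 := by
  funext x
  have hT := hasT q k x
  have h2 : HasFDerivAt (fun x : ℝ × ℝ => x.2) (ContinuousLinearMap.snd ℝ ℝ ℝ) x :=
    hasFDerivAt_snd
  have hP := h2.const_mul (2:ℝ)
  have h : HasFDerivAt (fun x => c * (Tf q k x) ^ e * (2*x.2)) _ x :=
    ((hT.rpow_const (p := e) (Or.inl (Tpos q k hk x).ne')).const_mul c).mul hP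
  rw [d2, h.fderiv]
  simp
  ring

lemma contDiff_phi (q k A B e : ℝ) (hk : 0 < k) :
    ContDiff ℝ 2 (fun x => A - B * (Tf q k x) ^ e) := by
  have he : Tf q k = fun x : ℝ × ℝ => (x.1*x.1-q)*(x.1*x.1-q)*(1/4) + (x.2*x.2 + k) := by
    funext z; simp only [Tf]; ring
  have hT : ContDiff ℝ 2 (Tf q k) := by
    rw [he]; fun_prop
  apply ContDiff.sub contDiff_const
  apply ContDiff.mul contDiff_const
  rw [contDiff_iff_contDiffAt]
  intro x
  exact (hT.contDiffAt).rpow_const_of_ne (Tpos q k hk x).ne'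

lemma quarter_root_lt (a b : ℝ) (ha : 0 ≤ a) (hb : 0 < b) :
    a ^ ((1:ℝ)/4) < b ↔ a < b ^ (4:ℕ) := by
  constructor
  · intro h
    have : (a ^ ((1:ℝ)/4)) ^ (4:ℕ) < b ^ (4:ℕ) :=
      pow_lt_pow_left₀ h (rpow_nonneg ha _) (by norm_num)
    rwa [← rpow_natCast (a ^ ((1:ℝ)/4)) 4, ← rpow_mul ha, show (1:ℝ)/4*(4:ℕ) = 1 by norm_num,
      rpow_one] at this
  · intro h
    have h4 : a ^ ((1:ℝ)/4) < (b ^ (4:ℕ)) ^ ((1:ℝ)/4) := rpow_lt_rpow ha h (by norm_num)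
    rwa [← rpow_natCast b 4, ← rpow_mul hb.le, show (4:ℕ)*((1:ℝ)/4) = 1 by norm_num,
      rpow_one] at h4

lemma quarter_root_sq_lt (a b : ℝ) (ha : 0 ≤ a) (hb : 0 < b) :
    (a ^ ((1:ℝ)/4)) ^ (2:ℕ) < b ↔ a < b ^ (2:ℕ) := by
  rw [← rpow_natCast (a ^ ((1:ℝ)/4)) 2, ← rpow_mul ha, show (1:ℝ)/4*(2:ℕ) = (1:ℝ)/2 by norm_num]
  constructor
  · intro h
    have : (a ^ ((1:ℝ)/2)) ^ (2:ℕ) < b ^ (2:ℕ) :=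
      pow_lt_pow_left₀ h (rpow_nonneg ha _) (by norm_num)
    rwa [← rpow_natCast (a ^ ((1:ℝ)/2)) 2, ← rpow_mul ha, show (1:ℝ)/2*(2:ℕ) = 1 by norm_num,
      rpow_one] at this
  · intro h
    have h2 : a ^ ((1:ℝ)/2) < (b ^ (2:ℕ)) ^ ((1:ℝ)/2) := rpow_lt_rpow ha h (by norm_num)
    rwa [← rpow_natCast b 2, ← rpow_mul hb.le, show (2:ℕ)*((1:ℝ)/2) = 1 by norm_num,
      rpow_one] at h2

lemma mem_Gtil_iff (y1 s : ℝ) (hs : 0 < s) (x : ℝ × ℝ) :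
    x ∈ Gtil (y1, 0) s ↔ (x.1^2 - y1^2)^2 + 4*x.2^2 < s^2 * (max s |y1|)^2 := by
  have hρ4 : (0:ℝ) ≤ (x.1^2 - y1^2)^2 + 4*x.2^2 := by positivity
  have hgr : grho x (y1, 0) = ((x.1^2 - y1^2)^2 + 4*x.2^2) ^ ((1:ℝ)/4) := by
    simp [grho]
  set a := (x.1^2 - y1^2)^2 + 4*x.2^2 with ha
  rcases lt_or_ge |y1| s with hy | hy
  · rw [max_eq_left hy.le]
    constructor
    · rintro (⟨_, h2⟩ | ⟨h1, _⟩)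
      · rw [hgr, quarter_root_lt a s hρ4 hs] at h2
        calc a < s^(4:ℕ) := h2
          _ = s^2*s^2 := by ring
      · exact absurd h1 (not_le.mpr (by simpa using hy))
    · intro h
      left
      refine ⟨by simpa using hy, ?_⟩
      rw [hgr, quarter_root_lt a s hρ4 hs]
      calc a < s^2*s^2 := h
        _ = s^(4:ℕ) := by ring
  · rw [max_eq_right hy]
    have hy0 : 0 < |y1| := lt_of_lt_of_le hs hy
    constructor
    · rintro (⟨h1, _⟩ | ⟨_, h2⟩)
      · exact absurd h1 (not_lt.mpr (by simpa using hy))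
      · rw [hgr, div_lt_iff₀ hy0] at h2
        have h2' : (a ^ ((1:ℝ)/4))^(2:ℕ) < s * |y1| := h2
        rw [quarter_root_sq_lt a (s*|y1|) hρ4 (by positivity)] at h2'
        calc a < (s*|y1|)^(2:ℕ) := h2'
          _ = s^2*|y1|^2 := by ring
    · intro h
      right
      refine ⟨by simpa using hy, ?_⟩
      rw [hgr, div_lt_iff₀ hy0]
      show (a ^ ((1:ℝ)/4))^(2:ℕ) < s * |y1|
      rw [quarter_root_sq_lt a (s*|y1|) hρ4 (by positivity)]
      calc a < s^2*|y1|^2 := h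
        _ = (s*|y1|)^(2:ℕ) := by ring

set_option maxHeartbeats 2000000 in
/-- **Existence of a global barrier** adapted to the sets `G̃(y,r)`. -/
theorem global_barrier (lam Lam : ℝ) (hlam : 0 < lam) (hLam : lam ≤ Lam) :
    ∃ C > (0 : ℝ), ∃ M > (1 : ℝ), ∀ y1 : ℝ, ∀ r > (0 : ℝ),
      ∃ φ ζ : ℝ × ℝ → ℝ,
        ContDiff ℝ 2 φ ∧
        Continuous ζ ∧ (∀ x, 0 ≤ ζ x ∧ ζ x ≤ 1) ∧
        tsupport ζ ⊆ closure (Gtil (y1, 0) r) ∧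
        (∀ x ∉ Gtil (y1, 0) (2 * r), 0 ≤ φ x) ∧
        (∀ x ∈ Gtil (y1, 0) r, φ x ≤ -2) ∧
        (∀ x : ℝ × ℝ, -M ≤ φ x) ∧
        (∀ a11 a12 a22 : ℝ × ℝ → ℝ, IsElliptic lam Lam a11 a12 a22 →
          ∀ x : ℝ × ℝ,
            Lop a11 a12 a22 φ x ≤ C * x.1 ^ 2 * ζ x / (r ^ 2 * (r + |y1|) ^ 2)) := by
  have hlam' : 0 < Lam := lt_of_lt_of_le hlam hLam
  set β : ℝ := 5*Lam/(4*lam) with hβdef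
  have hβ : 0 < β := by positivity
  have hβ4 : 4*lam*β = 5*Lam := by
    rw [hβdef]
    field_simp
  set c : ℝ := 2*lam/(5*Lam) with hcdef
  have hc : 0 < c := by positivity
  have hc2 : c ≤ 1/2 := by
    rw [hcdef, div_le_iff₀ (by positivity)]; nlinarith
  have hc5 : 5*Lam*c = 2*lam := by
    rw [hcdef]; field_simp
  set δ : ℝ := (3/2:ℝ)^(-β) - (4:ℝ)^(-β) with hδdef
  have hδ : 0 < δ := by
    rw [hδdef]
    have := rpow_lt_rpow_of_neg (show (0:ℝ) < 3/2 by norm_num)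
      (show (3/2:ℝ) < 4 by norm_num) (neg_lt_zero.mpr hβ)
    linarith
  have hcb2 : 0 < c^(-β-2) := rpow_pos_of_pos hc _
  have hcb : 0 < c^(-β) := rpow_pos_of_pos hc _
  clear_value β c δ
  refine ⟨64*lam*β*c^(-β-2)/δ, by positivity, 2 + 2*c^(-β)/δ, ?_, ?_⟩
  · have : 0 < 2*c^(-β)/δ := by positivity
    linarith
  intro y1 r hr
  set m : ℝ := max r |y1| with hmdef
  have hrm : r ≤ m := le_max_left _ _
  have hym : |y1| ≤ m := le_max_right _ _
  have hm : 0 < m := lt_of_lt_of_le hr hrm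
  set w0 : ℝ := r^2*m^2/4 with hw0def
  have hw0 : 0 < w0 := by positivity
  set w1 : ℝ := c*w0 with hw1def
  have hw1 : 0 < w1 := by positivity
  set q : ℝ := y1^2 with hqdef
  have hq : 0 ≤ q := sq_nonneg y1
  have hw0b : 0 < w0^β := rpow_pos_of_pos hw0 _
  set B : ℝ := 2*w0^β/δ with hBdef
  have hB : 0 < B := by positivity
  set A : ℝ := -2 + B*(w0+w1)^(-β) with hAdef
  clear_value m w0 w1 q B
  have hA : -2 ≤ A := by
    have : 0 ≤ B*(w0+w1)^(-β) := by positivity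
    rw [hAdef]; linarith
  -- the value of W := Tf - w1
  have hWval : ∀ x : ℝ × ℝ, Tf q w1 x - w1 = ((x.1^2 - y1^2)^2 + 4*x.2^2)/4 := by
    intro x; simp only [Tf, hqdef]; ring
  have hW0 : ∀ x : ℝ × ℝ, 0 ≤ Tf q w1 x - w1 := by
    intro x; rw [hWval x]; positivity
  have hT0 : ∀ x : ℝ × ℝ, 0 < Tf q w1 x := Tpos q w1 hw1
  -- membership characterizations
  have hmem : ∀ x : ℝ × ℝ, x ∈ Gtil (y1, 0) r ↔ Tf q w1 x - w1 < w0 := by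
    intro x
    rw [mem_Gtil_iff y1 r hr x, hWval x, ← hmdef, hw0def]
    constructor <;> intro h <;> linarith
  have hmem2 : ∀ x : ℝ × ℝ, x ∉ Gtil (y1, 0) (2*r) → 4*w0 ≤ Tf q w1 x - w1 := by
    intro x hx
    rw [mem_Gtil_iff y1 (2*r) (by linarith) x, not_lt] at hx
    rw [hWval x]
    have hmm : m ≤ max (2*r) |y1| := by
      rw [hmdef]; exact max_le_max (by linarith) le_rfl
    have : m^2 ≤ (max (2*r) |y1|)^2 := pow_le_pow_left₀ hm.le hmm 2
    have h2 : (2*r)^2 * m^2 ≤ (2*r)^2 * (max (2*r) |y1|)^2 :=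
      mul_le_mul_of_nonneg_left this (by positivity)
    rw [hw0def]
    nlinarith
  -- monotonicity facts for rpow
  have hmono : ∀ s t : ℝ, 0 < s → s ≤ t → t^(-β) ≤ s^(-β) := fun s t hs hst =>
    rpow_le_rpow_of_nonpos hs hst (by linarith)
  refine ⟨fun x => A - B * (Tf q w1 x) ^ (-β),
    fun x => max 0 (min 1 (2 - 2*(Tf q w1 x - w1)/w0)), contDiff_phi q w1 A B (-β) hw1,
    ?_, ?_, ?_, ?_, ?_, ?_, ?_⟩
  · -- continuity of ζ
    have hTc : Continuous (Tf q w1) := by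
      have he : Tf q w1 = fun x : ℝ × ℝ => (x.1*x.1-q)*(x.1*x.1-q)*(1/4) + (x.2*x.2 + w1) := by
        funext z; simp only [Tf]; ring
      rw [he]; fun_prop
    exact continuous_const.max (continuous_const.min
      (continuous_const.sub ((continuous_const.mul (hTc.sub continuous_const)).div_const w0)))
  · -- bounds of ζ
    intro x
    exact ⟨le_max_left _ _, max_le (by norm_num) (min_le_left _ _)⟩
  · -- support of ζ
    have hsupp : Function.support (fun x => max 0 (min 1 (2 - 2*(Tf q w1 x - w1)/w0)))
        ⊆ Gtil (y1, 0) r := by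
      intro x hx
      rw [Function.mem_support] at hx
      have h1 : 0 < min 1 (2 - 2*(Tf q w1 x - w1)/w0) := by
        by_contra h
        push_neg at h
        exact hx (max_eq_left h)
      have h2 : 0 < 2 - 2*(Tf q w1 x - w1)/w0 := lt_of_lt_of_le h1 (min_le_right _ _)
      rw [hmem x]
      have h3 : 2*(Tf q w1 x - w1)/w0 < 2 := by linarith
      rw [div_lt_iff₀ hw0] at h3
      linarith
    exact subset_trans (closure_mono hsupp) subset_rfl
  · -- φ ≥ 0 outside Gtil(y,2r)
    intro x hx
    show 0 ≤ A - B * (Tf q w1 x)^(-β)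
    have h4 : 4*w0 ≤ Tf q w1 x - w1 := hmem2 x hx
    have hT4 : 4*w0 ≤ Tf q w1 x := by linarith
    have h1 : (Tf q w1 x)^(-β) ≤ (4*w0)^(-β) := hmono _ _ (by positivity) hT4
    have h2 : (w0+w1)^(-β) ≥ ((3/2)*w0)^(-β) := by
      apply hmono _ _ (by positivity)
      rw [hw1def]; nlinarith
    have h3 : ((3/2)*w0)^(-β) = (3/2:ℝ)^(-β) * w0^(-β) :=
      mul_rpow (by norm_num) hw0.le
    have h5 : (4*w0)^(-β) = (4:ℝ)^(-β) * w0^(-β) := mul_rpow (by norm_num) hw0.le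
    have h6 : w0^β * w0^(-β) = 1 := by
      rw [← rpow_add hw0]; simp
    have hw0nb : 0 < w0^(-β) := rpow_pos_of_pos hw0 _
    have key : B * ((w0+w1)^(-β) - (Tf q w1 x)^(-β)) ≥ 2 := by
      have : (w0+w1)^(-β) - (Tf q w1 x)^(-β) ≥ δ * w0^(-β) := by
        rw [hδdef]
        have := h3 ▸ h2
        have := h5 ▸ h1
        nlinarith
      calc B * ((w0+w1)^(-β) - (Tf q w1 x)^(-β)) ≥ B * (δ * w0^(-β)) := by
            apply mul_le_mul_of_nonneg_left this hB.le
        _ = 2 * (w0^β * w0^(-β)) * (δ/δ) := by rw [hBdef]; ring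
        _ = 2 := by rw [h6, div_self hδ.ne']; ring
    rw [hAdef]
    linarith
  · -- φ ≤ -2 on Gtil(y,r)
    intro x hx
    show A - B * (Tf q w1 x)^(-β) ≤ -2
    rw [hmem x] at hx
    have h1 : (w0+w1)^(-β) ≤ (Tf q w1 x)^(-β) := hmono _ _ (hT0 x) (by linarith)
    have : B * (w0+w1)^(-β) ≤ B * (Tf q w1 x)^(-β) := mul_le_mul_of_nonneg_left h1 hB.le
    rw [hAdef]
    linarith
  · -- φ ≥ -M
    intro x
    show -(2 + 2*c^(-β)/δ) ≤ A - B * (Tf q w1 x)^(-β)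
    have h1 : (Tf q w1 x)^(-β) ≤ w1^(-β) := hmono _ _ hw1 (by have := hW0 x; linarith)
    have h2 : w1^(-β) = c^(-β) * w0^(-β) := by rw [hw1def]; exact mul_rpow hc.le hw0.le
    have h6 : w0^β * w0^(-β) = 1 := by rw [← rpow_add hw0]; simp
    have h3 : B * w1^(-β) = 2*c^(-β)/δ := by
      calc B * w1^(-β) = 2*(w0^β*w0^(-β))*c^(-β)/δ := by rw [h2, hBdef]; ring
        _ = 2*c^(-β)/δ := by rw [h6]; ring
    have h4 : B * (Tf q w1 x)^(-β) ≤ 2*c^(-β)/δ := by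
      rw [← h3]; exact mul_le_mul_of_nonneg_left h1 hB.le
    rw [hAdef]
    linarith
  · -- the operator estimate
    intro a11 a12 a22 hell x
    have ht : 0 < Tf q w1 x := hT0 x
    have hW : 0 ≤ Tf q w1 x - w1 := hW0 x
    have e1 := d1_phi q w1 A B (-β) hw1
    have e2 := d2_phi q w1 A B (-β) hw1
    have e11 := d1_psi1 q w1 (-β-1) (-(B*(-β))) hw1
    have e21 := d2_psi1 q w1 (-β-1) (-(B*(-β))) hw1
    have e22 := d2_psi2 q w1 (-β-1) (-(B*(-β))) hw1
    simp only [Lop]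
    rw [e1, e2, e11, e21, e22]
    beta_reduce
    set tv := Tf q w1 x with htv
    set t1 := tv ^ (-β-1) with ht1d
    set t2 := tv ^ (-β-1-1) with ht2d
    set P := (x.1*x.1 - q)*x.1 with hPd
    have ht1p : 0 < t1 := by rw [ht1d]; exact rpow_pos_of_pos ht _
    have ht2p : 0 < t2 := by rw [ht2d]; exact rpow_pos_of_pos ht _
    have ht12 : t1 = t2 * tv := by
      rw [ht1d, ht2d, ← rpow_add_one ht.ne']
      congr 1
      ring
    -- ellipticity facts
    have hQl : lam * (P^2 + (2*x.2*x.1)^2)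
        ≤ a11 x * P^2 + 2*a12 x * P * (2*x.2*x.1) + a22 x * (2*x.2*x.1)^2 :=
      (hell x (P, 2*x.2*x.1)).1
    have h11 := hell x (1, 0)
    have h22 := hell x (0, 1)
    have h11l : lam ≤ a11 x := by
      have := h11.1; norm_num at this; linarith
    have h11u : a11 x ≤ Lam := by
      have := h11.2; norm_num at this; linarith
    have h22u : a22 x ≤ Lam := by
      have := h22.2; norm_num at this; linarith
    have hxi : P^2 + (2*x.2*x.1)^2 = 4*x.1^2*(tv - w1) := by
      rw [hPd, htv]; simp only [Tf]; ring
    have hR : a11 x*(3*(x.1*x.1) - q) + 2*a22 x*x.1^2 ≤ 5*Lam*x.1^2 := by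
      linarith only [mul_nonneg (sub_nonneg.mpr h11u) (sq_nonneg x.1),
        mul_nonneg (sub_nonneg.mpr h22u) (sq_nonneg x.1),
        mul_nonneg (le_trans hlam.le h11l) hq]
    have hBβ : 0 ≤ B*β := mul_nonneg hB.le hβ.le
    have hfac1 : 0 ≤ B*β*(β+1)*t2 :=
      mul_nonneg (mul_nonneg hBβ (by linarith)) ht2p.le
    have hfac2 : 0 ≤ B*β*t1 := mul_nonneg hBβ ht1p.le
    have hstep1 : B*β*(β+1)*t2*(-(a11 x * P^2 + 2*a12 x * P * (2*x.2*x.1) + a22 x * (2*x.2*x.1)^2))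
        ≤ B*β*(β+1)*t2*(-(lam*(4*x.1^2*(tv - w1)))) := by
      apply mul_le_mul_of_nonneg_left _ hfac1
      calc -(a11 x * P^2 + 2*a12 x * P * (2*x.2*x.1) + a22 x * (2*x.2*x.1)^2)
          ≤ -(lam * (P^2 + (2*x.2*x.1)^2)) := neg_le_neg hQl
        _ = -(lam*(4*x.1^2*(tv - w1))) := by rw [hxi]
    have hstep2 : B*β*t1*(a11 x*(3*(x.1*x.1) - q) + 2*a22 x*x.1^2) ≤ B*β*t1*(5*Lam*x.1^2) :=
      mul_le_mul_of_nonneg_left hR hfac2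
    have hLeq : a11 x * (-(B * -β) * (-β - 1) * t2 * P * P + -(B * -β) * t1 * (3 * (x.1 * x.1) - q)) +
          2 * a12 x * x.1 * (-(B * -β) * (-β - 1) * t2 * (2 * x.2) * P) +
          a22 x * x.1 ^ 2 * (-(B * -β) * (-β - 1) * t2 * (2 * x.2) * (2 * x.2) + -(B * -β) * t1 * 2)
        = B*β*(β+1)*t2*(-(a11 x * P^2 + 2*a12 x * P * (2*x.2*x.1) + a22 x * (2*x.2*x.1)^2))
          + B*β*t1*(a11 x*(3*(x.1*x.1) - q) + 2*a22 x*x.1^2) := by ring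
    rw [hLeq]
    have hmid : B*β*(β+1)*t2*(-(lam*(4*x.1^2*(tv - w1)))) + B*β*t1*(5*Lam*x.1^2)
        = B*β*x.1^2*t2*(-(4*lam)*(tv - w1) + 2*lam*w0) := by
      rw [ht12]
      linear_combination (B*β*x.1^2*t2*(w1 - tv))*hβ4 + (B*β*x.1^2*t2*w0)*hc5
        + (B*β*x.1^2*t2*5*Lam)*hw1def
    have hCpos : 0 < 64*lam*β*c^(-β-2)/δ :=
      div_pos (mul_pos (mul_pos (mul_pos (by norm_num) hlam) hβ) hcb2) hδ
    have hdenpos : 0 < r^2*(r+|y1|)^2 := by positivity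
    refine le_trans (le_trans (add_le_add hstep1 hstep2) (le_of_eq hmid)) ?_
    rcases le_or_gt (w0/2) (tv - w1) with hcase | hcase
    · -- far region : LHS ≤ 0 ≤ RHS
      have hb0 : -(4*lam)*(tv - w1) + 2*lam*w0 ≤ 0 := by
        linarith only [mul_nonneg hlam.le (by linarith only [hcase] : (0:ℝ) ≤ 2*(tv-w1) - w0)]
      have ha0 : 0 ≤ B*β*x.1^2*t2 :=
        mul_nonneg (mul_nonneg hBβ (sq_nonneg x.1)) ht2p.le
      have hL0 : B*β*x.1^2*t2*(-(4*lam)*(tv - w1) + 2*lam*w0) ≤ 0 :=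
        mul_nonpos_of_nonneg_of_nonpos ha0 hb0
      refine le_trans hL0 ?_
      apply div_nonneg _ hdenpos.le
      exact mul_nonneg (mul_nonneg hCpos.le (sq_nonneg x.1)) (le_max_left 0 _)
    · -- inner region : ζ = 1
      have h3 : 2*(tv - w1)/w0 < 1 := by rw [div_lt_one hw0]; linarith
      have hζ1 : (0:ℝ) ⊔ (1 ⊓ (2 - 2*(tv - w1)/w0)) = 1 := by
        rw [min_eq_left (by linarith), max_eq_right zero_le_one]
      rw [hζ1, mul_one]
      have hKt2 : t2 ≤ w1^(-β-1-1) := by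
        rw [ht2d]
        exact rpow_le_rpow_of_nonpos hw1 (by linarith) (by linarith)
      have hw1p : 0 < w1^(-β-1-1:ℝ) := rpow_pos_of_pos hw1 _
      have hrm2 : (r+|y1|)^2 ≤ (2*m)^2 := pow_le_pow_left₀ (by positivity) (by linarith) 2
      have hden16 : r^2*(r+|y1|)^2 ≤ 16*w0 := by
        calc r^2*(r+|y1|)^2 ≤ r^2*((2*m)^2) := mul_le_mul_of_nonneg_left hrm2 (sq_nonneg r)
          _ = 16*w0 := by rw [hw0def]; ring
      have hexp : (-β-1-1 : ℝ) = -β-2 := by ring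
      have hw1r : w1^(-β-2:ℝ) = c^(-β-2)*w0^(-β-2) := by
        rw [hw1def]; exact mul_rpow hc.le hw0.le
      have hp2 : w0^β * w0^(-β-2:ℝ) * (w0*w0) = 1 := by
        rw [← rpow_add hw0, show β + (-β-2) = (-2:ℝ) by ring, rpow_neg hw0.le,
          show ((2:ℝ)) = ((2:ℕ):ℝ) by norm_num, rpow_natCast]
        field_simp
      have hKeq : B*β*w1^(-β-1-1:ℝ)*(2*lam*w0)*(16*w0) = 64*lam*β*c^(-β-2)/δ := by
        rw [hexp, hw1r, hBdef]
        calc 2*w0^β/δ*β*(c^(-β-2)*w0^(-β-2))*(2*lam*w0)*(16*w0)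
            = 64*lam*β*c^(-β-2)/δ*(w0^β*w0^(-β-2)*(w0*w0)) := by ring
          _ = 64*lam*β*c^(-β-2)/δ := by rw [hp2, mul_one]
      have hK0 : 0 ≤ B*β*w1^(-β-1-1:ℝ)*(2*lam*w0) :=
        mul_nonneg (mul_nonneg hBβ hw1p.le) (by positivity)
      have hfin : B*β*w1^(-β-1-1:ℝ)*(2*lam*w0) ≤ 64*lam*β*c^(-β-2)/δ / (r^2*(r+|y1|)^2) := by
        rw [le_div_iff₀ hdenpos]
        calc B*β*w1^(-β-1-1:ℝ)*(2*lam*w0)*(r^2*(r+|y1|)^2)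
            ≤ B*β*w1^(-β-1-1:ℝ)*(2*lam*w0)*(16*w0) := mul_le_mul_of_nonneg_left hden16 hK0
          _ = 64*lam*β*c^(-β-2)/δ := hKeq
      calc B*β*x.1^2*t2*(-(4*lam)*(tv - w1) + 2*lam*w0)
          ≤ B*β*x.1^2*t2*(2*lam*w0) := by
            apply mul_le_mul_of_nonneg_left _
              (mul_nonneg (mul_nonneg hBβ (sq_nonneg x.1)) ht2p.le)
            linarith only [mul_nonneg hlam.le hW]
        _ = (B*β*t2*(2*lam*w0))*x.1^2 := by ring
        _ ≤ (B*β*w1^(-β-1-1:ℝ)*(2*lam*w0))*x.1^2 := by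
            apply mul_le_mul_of_nonneg_right _ (sq_nonneg x.1)
            apply mul_le_mul_of_nonneg_right _ (by positivity : (0:ℝ) ≤ 2*lam*w0)
            exact mul_le_mul_of_nonneg_left hKt2 hBβ
        _ ≤ (64*lam*β*c^(-β-2)/δ/(r^2*(r+|y1|)^2))*x.1^2 :=
            mul_le_mul_of_nonneg_right hfin (sq_nonneg x.1)
        _ = 64*lam*β*c^(-β-2)/δ*x.1^2/(r^2*(r+|y1|)^2) := by ring
end
end

section
/- Existence of a γ-lower barrier for rings: There exists γ > 0, depending only on λ and Λ, such that for every y ∈ ℝ² and every r > 0 there exists a function Φ ∈ C²(R(y,r,3r)) ∩ C(closure R(y,r,3r)), where R(y,r,3r) = G̃(y,3r) \ closure(G̃(y,r)), satisfying: LΦ ≥ 0 on R(y,r,3r) for every choice of coefficients a11, a12, a22 satisfying the uniform ellipticity condition with constants λ, Λ; Φ ≤ 0 on ∂G̃(y,3r); Φ ≤ 1 on ∂G̃(y,r); Φ ≥ γ on ∂G̃(y,2r); and Φ is an even function of the variable x1 (Φ(x1,x2) = Φ(−x1,x2)). -/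
open MeasureTheory Real Set

noncomputable section

namespace RB

def sf (c b : ℝ) (x : ℝ × ℝ) : ℝ := (x.1 ^ 2 - c) ^ 2 + 4 * (x.2 - b) ^ 2

lemma sf_nonneg (c b : ℝ) (x : ℝ × ℝ) : 0 ≤ sf c b x := by unfold sf; positivity

lemma contDiff_sf (c b : ℝ) : ContDiff ℝ ⊤ (sf c b) := by
  unfold sf; fun_prop

def Ds (c b : ℝ) (x : ℝ × ℝ) : (ℝ × ℝ) →L[ℝ] ℝ :=
  (4 * x.1 * (x.1 ^ 2 - c)) • ContinuousLinearMap.fst ℝ ℝ ℝ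
    + (8 * (x.2 - b)) • ContinuousLinearMap.snd ℝ ℝ ℝ

lemma Ds_apply (c b : ℝ) (x v : ℝ × ℝ) :
    Ds c b x v = 4 * x.1 * (x.1 ^ 2 - c) * v.1 + 8 * (x.2 - b) * v.2 := by
  simp [Ds, smul_eq_mul]

lemma hasFDerivAt_sf (c b : ℝ) (x : ℝ × ℝ) : HasFDerivAt (sf c b) (Ds c b x) x := by
  have h1 : HasFDerivAt (fun z : ℝ × ℝ => z.1) (ContinuousLinearMap.fst ℝ ℝ ℝ) x :=
    hasFDerivAt_fst
  have h2 : HasFDerivAt (fun z : ℝ × ℝ => z.2) (ContinuousLinearMap.snd ℝ ℝ ℝ) x :=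
    hasFDerivAt_snd
  have p1 : HasFDerivAt (fun z : ℝ × ℝ => (z.1 ^ 2 - c) ^ 2)
      ((2 * (x.1 ^ 2 - c)) • ((2 * x.1) • ContinuousLinearMap.fst ℝ ℝ ℝ)) x := by
    have hin : HasFDerivAt (fun z : ℝ × ℝ => z.1 ^ 2 - c)
        ((2 * x.1) • ContinuousLinearMap.fst ℝ ℝ ℝ) x := by
      have := (hasDerivAt_pow 2 x.1).comp_hasFDerivAt x h1
      simpa using this.sub_const c
    have := (hasDerivAt_pow 2 (x.1 ^ 2 - c)).comp_hasFDerivAt x hin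
    simpa [smul_smul, Function.comp_def] using this
  have p2 : HasFDerivAt (fun z : ℝ × ℝ => 4 * (z.2 - b) ^ 2)
      ((4 : ℝ) • ((2 * (x.2 - b)) • ContinuousLinearMap.snd ℝ ℝ ℝ)) x := by
    have hin : HasFDerivAt (fun z : ℝ × ℝ => z.2 - b) (ContinuousLinearMap.snd ℝ ℝ ℝ) x :=
      h2.sub_const b
    have := (hasDerivAt_pow 2 (x.2 - b)).comp_hasFDerivAt x hin
    simpa [smul_smul] using this.const_mul 4
  have h3 := p1.add p2
  refine h3.congr_fderiv ?_
  refine ContinuousLinearMap.ext fun v => ?_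
  simp [Ds, smul_eq_mul]
  ring


lemma hasFDerivAt_u (c : ℝ) (x : ℝ × ℝ) :
    HasFDerivAt (fun z : ℝ × ℝ => 4 * z.1 * (z.1 ^ 2 - c))
      ((12 * x.1 ^ 2 - 4 * c) • ContinuousLinearMap.fst ℝ ℝ ℝ) x := by
  have h1 : HasFDerivAt (fun z : ℝ × ℝ => z.1) (ContinuousLinearMap.fst ℝ ℝ ℝ) x :=
    hasFDerivAt_fst
  have hin : HasFDerivAt (fun z : ℝ × ℝ => z.1 ^ 2 - c)
      ((2 * x.1) • ContinuousLinearMap.fst ℝ ℝ ℝ) x := by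
    have := (hasDerivAt_pow 2 x.1).comp_hasFDerivAt x h1
    simpa using this.sub_const c
  have hmul := (h1.const_mul 4).mul hin
  refine hmul.congr_fderiv ?_
  refine ContinuousLinearMap.ext fun v => ?_
  simp [smul_eq_mul]
  ring

lemma hasFDerivAt_w (b : ℝ) (x : ℝ × ℝ) :
    HasFDerivAt (fun z : ℝ × ℝ => 8 * (z.2 - b))
      ((8 : ℝ) • ContinuousLinearMap.snd ℝ ℝ ℝ) x := by
  have h2 : HasFDerivAt (fun z : ℝ × ℝ => z.2) (ContinuousLinearMap.snd ℝ ℝ ℝ) x :=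
    hasFDerivAt_snd
  exact (h2.sub_const b).const_mul 8

lemma second_derivs (c b A B q : ℝ) (x : ℝ × ℝ) (hx : 0 < sf c b x) :
    d1 (d1 (fun z => A * sf c b z ^ q + B)) x
        = A * q * ((q - 1) * sf c b x ^ (q - 2) * (4 * x.1 * (x.1 ^ 2 - c)) * (4 * x.1 * (x.1 ^ 2 - c))
          + sf c b x ^ (q - 1) * (12 * x.1 ^ 2 - 4 * c))
    ∧ d2 (d1 (fun z => A * sf c b z ^ q + B)) x
        = A * q * ((q - 1) * sf c b x ^ (q - 2) * (4 * x.1 * (x.1 ^ 2 - c)) * (8 * (x.2 - b)))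
    ∧ d2 (d2 (fun z => A * sf c b z ^ q + B)) x
        = A * q * ((q - 1) * sf c b x ^ (q - 2) * (8 * (x.2 - b)) * (8 * (x.2 - b))
          + sf c b x ^ (q - 1) * 8) := by
  set Φ : ℝ × ℝ → ℝ := fun z => A * sf c b z ^ q + B with hΦdef
  have hU : IsOpen {z : ℝ × ℝ | 0 < sf c b z} :=
    isOpen_lt continuous_const (contDiff_sf c b).continuous
  have hxU : x ∈ {z : ℝ × ℝ | 0 < sf c b z} := hx
  have hΦ : ∀ z ∈ {z : ℝ × ℝ | 0 < sf c b z},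
      HasFDerivAt Φ ((A * (q * sf c b z ^ (q - 1))) • Ds c b z) z := by
    intro z hz
    have := (((hasFDerivAt_sf c b z).rpow_const (p := q) (Or.inl (ne_of_gt hz))).const_mul
      A).add_const B
    simpa [smul_smul, hΦdef] using this
  set H1 : ℝ × ℝ → ℝ :=
    fun z => A * q * (sf c b z ^ (q - 1) * (4 * z.1 * (z.1 ^ 2 - c))) with hH1def
  set H2 : ℝ × ℝ → ℝ :=
    fun z => A * q * (sf c b z ^ (q - 1) * (8 * (z.2 - b))) with hH2def
  have heq1 : Set.EqOn (d1 Φ) H1 {z : ℝ × ℝ | 0 < sf c b z} := by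
    intro z hz
    simp only [d1, (hΦ z hz).fderiv, hH1def]
    simp [Ds_apply, smul_eq_mul]
    ring
  have heq2 : Set.EqOn (d2 Φ) H2 {z : ℝ × ℝ | 0 < sf c b z} := by
    intro z hz
    simp only [d2, (hΦ z hz).fderiv, hH2def]
    simp [Ds_apply, smul_eq_mul]
    ring
  have hF1 : d1 Φ =ᶠ[nhds x] H1 := Filter.eventuallyEq_of_mem (hU.mem_nhds hxU) heq1
  have hF2 : d2 Φ =ᶠ[nhds x] H2 := Filter.eventuallyEq_of_mem (hU.mem_nhds hxU) heq2
  have ht1 : HasFDerivAt (fun z => sf c b z ^ (q - 1))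
      (((q - 1) * sf c b x ^ (q - 2)) • Ds c b x) x := by
    have := (hasFDerivAt_sf c b x).rpow_const (p := q - 1) (Or.inl (ne_of_gt hx))
    simpa [show q - 1 - 1 = q - 2 from by ring] using this
  have hH1 : HasFDerivAt H1
      ((A * q) • ((sf c b x ^ (q - 1)) •
          ((12 * x.1 ^ 2 - 4 * c) • ContinuousLinearMap.fst ℝ ℝ ℝ)
        + (4 * x.1 * (x.1 ^ 2 - c)) • (((q - 1) * sf c b x ^ (q - 2)) • Ds c b x))) x := by
    exact (ht1.mul (hasFDerivAt_u c x)).const_mul (A * q)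
  have hH2 : HasFDerivAt H2
      ((A * q) • ((sf c b x ^ (q - 1)) • ((8 : ℝ) • ContinuousLinearMap.snd ℝ ℝ ℝ)
        + (8 * (x.2 - b)) • (((q - 1) * sf c b x ^ (q - 2)) • Ds c b x))) x := by
    exact (ht1.mul (hasFDerivAt_w b x)).const_mul (A * q)
  refine ⟨?_, ?_, ?_⟩
  · rw [d1, hF1.fderiv_eq, hH1.fderiv]
    simp only [ContinuousLinearMap.add_apply, ContinuousLinearMap.coe_smul', Pi.smul_apply,
      Ds_apply, ContinuousLinearMap.coe_fst', ContinuousLinearMap.coe_snd', smul_eq_mul]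
    ring
  · rw [d2, hF1.fderiv_eq, hH1.fderiv]
    simp only [ContinuousLinearMap.add_apply, ContinuousLinearMap.coe_smul', Pi.smul_apply,
      Ds_apply, ContinuousLinearMap.coe_fst', ContinuousLinearMap.coe_snd', smul_eq_mul]
    ring
  · rw [d2, hF2.fderiv_eq, hH2.fderiv]
    simp only [ContinuousLinearMap.add_apply, ContinuousLinearMap.coe_smul', Pi.smul_apply,
      Ds_apply, ContinuousLinearMap.coe_fst', ContinuousLinearMap.coe_snd', smul_eq_mul]
    ring

set_option maxHeartbeats 1000000 in
lemma lop_nonneg (lam Lam : ℝ) (hlam : 0 < lam) (hLam : lam ≤ Lam)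
    (c b A B q : ℝ) (hA : 0 < A) (hc : 0 ≤ c) (hq : q = -(2 * Lam / lam))
    (a11 a12 a22 : ℝ × ℝ → ℝ) (hell : IsElliptic lam Lam a11 a12 a22)
    (x : ℝ × ℝ) (hx : 0 < sf c b x) :
    0 ≤ Lop a11 a12 a22 (fun z => A * sf c b z ^ q + B) x := by
  obtain ⟨e11, e12, e22⟩ := second_derivs c b A B q x hx
  set t := sf c b x with htdef
  set u : ℝ := 4 * x.1 * (x.1 ^ 2 - c) with hudef
  set w : ℝ := 8 * (x.2 - b) with hwdef
  have hLam0 : 0 < Lam := lt_of_lt_of_le hlam hLam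
  have hqneg : q < 0 := by
    rw [hq]
    have : 0 < 2 * Lam / lam := by positivity
    linarith
  have hpow : t ^ (q - 1) = t ^ (q - 2) * t := by
    rw [show q - 1 = q - 2 + 1 from by ring, Real.rpow_add_one (ne_of_gt hx)]
  have hQ := (hell x (u, x.1 * w)).1
  simp only at hQ
  have ha11l := (hell x (1, 0)).1
  have ha11u := (hell x (1, 0)).2
  have ha22l := (hell x (0, 1)).1
  have ha22u := (hell x (0, 1)).2
  simp only at ha11l ha11u ha22l ha22u
  have ha11l' : lam ≤ a11 x := by nlinarith [ha11l]
  have ha11u' : a11 x ≤ Lam := by nlinarith [ha11u]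
  have ha22l' : lam ≤ a22 x := by nlinarith [ha22l]
  have ha22u' : a22 x ≤ Lam := by nlinarith [ha22u]
  set Q : ℝ := a11 x * u ^ 2 + 2 * a12 x * u * (x.1 * w) + a22 x * (x.1 * w) ^ 2 with hQdef
  set T : ℝ := a11 x * (12 * x.1 ^ 2 - 4 * c) + 8 * a22 x * x.1 ^ 2 with hTdef
  have hkey : u ^ 2 + (x.1 * w) ^ 2 = 16 * x.1 ^ 2 * t := by
    rw [hudef, hwdef, htdef]; unfold sf; ring
  have hQl : lam * (16 * x.1 ^ 2 * t) ≤ Q := by rw [← hkey]; exact hQ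
  have hQ0 : 0 ≤ Q := le_trans (by positivity) hQl
  have hT : T ≤ 20 * Lam * x.1 ^ 2 := by nlinarith [hc, sq_nonneg x.1]
  have hE : (q - 1) * Q + t * T ≤ 0 := by
    have h1 : (q - 1) * Q ≤ (q - 1) * (lam * (16 * x.1 ^ 2 * t)) := by
      apply mul_le_mul_of_nonpos_left hQl (by linarith)
    have h2 : t * T ≤ t * (20 * Lam * x.1 ^ 2) := by
      apply mul_le_mul_of_nonneg_left hT (le_of_lt hx)
    have h3 : 16 * lam * q = -(32 * Lam) := by
      rw [hq]; field_simp; ring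
    nlinarith [h1, h2, mul_nonneg (mul_nonneg (le_of_lt hlam) (sq_nonneg x.1)) (le_of_lt hx),
      mul_nonneg (mul_nonneg (le_of_lt hLam0) (sq_nonneg x.1)) (le_of_lt hx)]
  have hLop : Lop a11 a12 a22 (fun z => A * sf c b z ^ q + B) x
      = (A * q) * (t ^ (q - 2) * ((q - 1) * Q + t * T)) := by
    rw [Lop, e11, e12, e22, hQdef, hTdef, hpow]
    ring
  rw [hLop]
  have hK : A * q ≤ 0 := mul_nonpos_of_nonneg_of_nonpos (le_of_lt hA) (le_of_lt hqneg)
  have hM : t ^ (q - 2) * ((q - 1) * Q + t * T) ≤ 0 :=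
    mul_nonpos_of_nonneg_of_nonpos (le_of_lt (Real.rpow_pos_of_pos hx (q - 2))) hE
  nlinarith [mul_nonneg (neg_nonneg.mpr hK) (neg_nonneg.mpr hM)]

def SR (t R : ℝ) : ℝ := if t < R then R ^ 4 else (R * t) ^ 2

lemma quarter_lt_iff (s R : ℝ) (hs : 0 ≤ s) (hR : 0 < R) :
    s ^ ((1 : ℝ) / 4) < R ↔ s < R ^ 4 := by
  have h4 : ((R : ℝ) ^ (4 : ℕ)) ^ ((1 : ℝ) / 4) = R := by
    rw [← Real.rpow_natCast R 4, ← Real.rpow_mul hR.le]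
    norm_num
  have h5 := Real.rpow_lt_rpow_iff (z := (1 : ℝ) / 4) hs
    (by positivity : (0 : ℝ) ≤ R ^ (4 : ℕ)) (by norm_num)
  rw [h4] at h5
  exact h5

lemma half_lt_iff (s M : ℝ) (hs : 0 ≤ s) (hM : 0 < M) :
    s ^ ((1 : ℝ) / 2) < M ↔ s < M ^ 2 := by
  have h2 : ((M : ℝ) ^ (2 : ℕ)) ^ ((1 : ℝ) / 2) = M := by
    rw [← Real.rpow_natCast M 2, ← Real.rpow_mul hM.le]
    norm_num
  have h5 := Real.rpow_lt_rpow_iff (z := (1 : ℝ) / 2) hs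
    (by positivity : (0 : ℝ) ≤ M ^ (2 : ℕ)) (by norm_num)
  rw [h2] at h5
  exact h5

lemma Gtil_eq (y : ℝ × ℝ) (R : ℝ) (hR : 0 < R) :
    Gtil y R = {x | sf (y.1 ^ 2) y.2 x < SR |y.1| R} := by
  ext x
  have hs : 0 ≤ sf (y.1 ^ 2) y.2 x := sf_nonneg _ _ _
  have hgr : grho x y = sf (y.1 ^ 2) y.2 x ^ ((1 : ℝ) / 4) := rfl
  simp only [Gtil, Set.mem_setOf_eq, SR]
  split_ifs with h
  · constructor
    · rintro (⟨-, hlt⟩ | ⟨hge, -⟩)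
      · rw [hgr] at hlt; exact (quarter_lt_iff _ _ hs hR).1 hlt
      · linarith
    · intro hlt; exact Or.inl ⟨h, by rw [hgr]; exact (quarter_lt_iff _ _ hs hR).2 hlt⟩
  · push_neg at h
    have hy : 0 < |y.1| := lt_of_lt_of_le hR h
    have hsq : grho x y ^ 2 = sf (y.1 ^ 2) y.2 x ^ ((1 : ℝ) / 2) := by
      rw [hgr, ← Real.rpow_natCast (sf (y.1 ^ 2) y.2 x ^ ((1 : ℝ) / 4)) 2,
        ← Real.rpow_mul hs]
      norm_num
    constructor
    · rintro (⟨hlt, -⟩ | ⟨-, hlt⟩)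
      · linarith
      · rw [hsq, div_lt_iff₀ hy] at hlt
        exact (half_lt_iff _ _ hs (by positivity)).1 hlt
    · intro hlt
      refine Or.inr ⟨h, ?_⟩
      rw [hsq, div_lt_iff₀ hy]
      exact (half_lt_iff _ _ hs (by positivity)).2 hlt

lemma frontier_Gtil_subset (y : ℝ × ℝ) (R : ℝ) (hR : 0 < R) :
    frontier (Gtil y R) ⊆ {x | sf (y.1 ^ 2) y.2 x = SR |y.1| R} := by
  rw [Gtil_eq y R hR]
  have hc : Continuous (sf (y.1 ^ 2) y.2) := (contDiff_sf _ _).continuous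
  intro x hx
  have h2 := hc.frontier_preimage_subset (Set.Iio (SR |y.1| R)) hx
  rw [frontier_Iio] at h2
  exact h2

lemma SR_pos (t r : ℝ) (ht : 0 ≤ t) (hr : 0 < r) : 0 < SR t r := by
  unfold SR; split_ifs with h
  · positivity
  · push_neg at h
    have : 0 < t := lt_of_lt_of_le hr h
    positivity

lemma SR_lt13 (t r : ℝ) (ht : 0 ≤ t) (hr : 0 < r) : SR t r < SR t (3 * r) := by
  unfold SR; split_ifs with h1 h2 h2
  · nlinarith [pow_pos hr 4]
  · linarith
  · nlinarith [mul_pos hr hr, mul_pos (sub_pos.mpr h2) (by linarith : (0:ℝ) < 3 * r + t)]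
  · push_neg at h1
    nlinarith [mul_pos hr (lt_of_lt_of_le hr h1)]

lemma SR_23 (t r : ℝ) (ht : 0 ≤ t) (hr : 0 < r) : 9 * SR t (2 * r) ≤ 4 * SR t (3 * r) := by
  unfold SR; split_ifs with h1 h2 h2
  · nlinarith [pow_pos hr 4]
  · linarith
  · push_neg at h1
    nlinarith [mul_pos hr hr, mul_pos (sub_pos.mpr h2) (by linarith : (0:ℝ) < 3 * r + t)]
  · push_neg at h1 h2
    nlinarith [mul_pos hr (lt_of_lt_of_le hr (by linarith : r ≤ t))]

lemma SR_31 (t r : ℝ) (ht : 0 ≤ t) (hr : 0 < r) : SR t (3 * r) ≤ 81 * SR t r := by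
  unfold SR; split_ifs with h1 h2 h2
  · nlinarith [pow_pos hr 4]
  · push_neg at h2
    nlinarith [mul_pos hr hr, mul_self_le_mul_self hr.le h2]
  · linarith
  · push_neg at h1 h2
    nlinarith [mul_pos hr (lt_of_lt_of_le hr h2)]

end RB

/-- **Existence of a `γ`-lower barrier for rings** `G̃(y,3r) \ closure G̃(y,r)`. -/
theorem exists_ring_barrier (lam Lam : ℝ) (hlam : 0 < lam) (hLam : lam ≤ Lam) :
    ∃ γ > (0 : ℝ), ∀ y : ℝ × ℝ, ∀ r > (0 : ℝ), ∃ Φ : ℝ × ℝ → ℝ,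
      ContDiffOn ℝ 2 Φ (Gtil y (3 * r) \ closure (Gtil y r)) ∧
      ContinuousOn Φ (closure (Gtil y (3 * r) \ closure (Gtil y r))) ∧
      (∀ a11 a12 a22 : ℝ × ℝ → ℝ, IsElliptic lam Lam a11 a12 a22 →
        ∀ x ∈ Gtil y (3 * r) \ closure (Gtil y r), 0 ≤ Lop a11 a12 a22 Φ x) ∧
      (∀ x ∈ frontier (Gtil y (3 * r)), Φ x ≤ 0) ∧
      (∀ x ∈ frontier (Gtil y r), Φ x ≤ 1) ∧
      (∀ x ∈ frontier (Gtil y (2 * r)), γ ≤ Φ x) ∧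
      (∀ x : ℝ × ℝ, Φ (-x.1, x.2) = Φ x) := by
  have hLam0 : 0 < Lam := lt_of_lt_of_le hlam hLam
  set q : ℝ := -(2 * Lam / lam) with hqdef
  have hqneg : q < 0 := by
    have : 0 < 2 * Lam / lam := by positivity
    rw [hqdef]; linarith
  have h49 : 1 < (4 / 9 : ℝ) ^ q :=
    Real.one_lt_rpow_of_pos_of_lt_one_of_neg (by norm_num) (by norm_num) hqneg
  have h81 : 1 < (1 / 81 : ℝ) ^ q :=
    Real.one_lt_rpow_of_pos_of_lt_one_of_neg (by norm_num) (by norm_num) hqneg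
  refine ⟨((4 / 9 : ℝ) ^ q - 1) / ((1 / 81 : ℝ) ^ q - 1),
    div_pos (by linarith) (by linarith), ?_⟩
  set γ : ℝ := ((4 / 9 : ℝ) ^ q - 1) / ((1 / 81 : ℝ) ^ q - 1) with hγdef
  have hγpos : 0 < γ := div_pos (by linarith) (by linarith)
  intro y r hr
  have h2r : (0 : ℝ) < 2 * r := by linarith
  have h3r : (0 : ℝ) < 3 * r := by linarith
  have htt : (0 : ℝ) ≤ |y.1| := abs_nonneg _
  set S1 : ℝ := RB.SR |y.1| r with hS1def
  set S2 : ℝ := RB.SR |y.1| (2 * r) with hS2def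
  set S3 : ℝ := RB.SR |y.1| (3 * r) with hS3def
  have hS1 : 0 < S1 := RB.SR_pos _ _ htt hr
  have hS2 : 0 < S2 := RB.SR_pos _ _ htt h2r
  have hS3 : 0 < S3 := RB.SR_pos _ _ htt h3r
  have hS13 : S1 < S3 := RB.SR_lt13 _ _ htt hr
  have hS23 : 9 * S2 ≤ 4 * S3 := RB.SR_23 _ _ htt hr
  have hS31 : S3 ≤ 81 * S1 := RB.SR_31 _ _ htt hr
  have hS3q : S3 ^ q < S1 ^ q := Real.rpow_lt_rpow_of_neg hS1 hS13 hqneg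
  set Den : ℝ := S1 ^ q - S3 ^ q with hDendef
  have hDen : 0 < Den := by rw [hDendef]; linarith
  set A : ℝ := 1 / Den with hAdef
  have hA : 0 < A := by rw [hAdef]; positivity
  set B : ℝ := -(S3 ^ q * A) with hBdef
  set Φ : ℝ × ℝ → ℝ := fun z => A * RB.sf (y.1 ^ 2) y.2 z ^ q + B with hΦdef
  -- basic facts about the ring
  have hG3 : Gtil y (3 * r) = {x | RB.sf (y.1 ^ 2) y.2 x < S3} := RB.Gtil_eq y (3 * r) h3r
  have hG1 : Gtil y r = {x | RB.sf (y.1 ^ 2) y.2 x < S1} := RB.Gtil_eq y r hr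
  have hring : ∀ x ∈ Gtil y (3 * r) \ closure (Gtil y r), S1 ≤ RB.sf (y.1 ^ 2) y.2 x := by
    intro x hx
    by_contra hcon
    push_neg at hcon
    exact hx.2 (subset_closure (by rw [hG1]; exact hcon))
  have hcl : ∀ x ∈ closure (Gtil y (3 * r) \ closure (Gtil y r)),
      S1 ≤ RB.sf (y.1 ^ 2) y.2 x := by
    intro x hx
    have hclosed : IsClosed {x : ℝ × ℝ | S1 ≤ RB.sf (y.1 ^ 2) y.2 x} :=
      isClosed_le continuous_const (RB.contDiff_sf _ _).continuous
    exact closure_minimal hring hclosed hx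
  refine ⟨Φ, ?_, ?_, ?_, ?_, ?_, ?_, ?_⟩
  · -- C² on the ring
    intro x hx
    have hpos : 0 < RB.sf (y.1 ^ 2) y.2 x := lt_of_lt_of_le hS1 (hring x hx)
    have h1 : ContDiffAt ℝ 2 (fun z => RB.sf (y.1 ^ 2) y.2 z ^ q) x :=
      ((RB.contDiff_sf (y.1 ^ 2) y.2).contDiffAt.of_le le_top).rpow_const_of_ne
        (ne_of_gt hpos)
    exact ((contDiffAt_const.mul h1).add contDiffAt_const).contDiffWithinAt
  · -- continuity on the closure
    intro x hx
    have hpos : 0 < RB.sf (y.1 ^ 2) y.2 x := lt_of_lt_of_le hS1 (hcl x hx)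
    have h1 : ContinuousAt (fun z => RB.sf (y.1 ^ 2) y.2 z ^ q) x :=
      ((RB.contDiff_sf (y.1 ^ 2) y.2).continuous.continuousAt).rpow_const
        (Or.inl (ne_of_gt hpos))
    exact ((continuousAt_const.mul h1).add continuousAt_const).continuousWithinAt
  · -- subsolution
    intro a11 a12 a22 hell x hx
    have hpos : 0 < RB.sf (y.1 ^ 2) y.2 x := lt_of_lt_of_le hS1 (hring x hx)
    exact RB.lop_nonneg lam Lam hlam hLam (y.1 ^ 2) y.2 A B q hA (sq_nonneg _) hqdef
      a11 a12 a22 hell x hpos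
  · -- outer boundary
    intro x hx
    have hxv : RB.sf (y.1 ^ 2) y.2 x = S3 := RB.frontier_Gtil_subset y (3 * r) h3r hx
    have : Φ x = 0 := by rw [hΦdef]; simp only; rw [hxv, hBdef]; ring
    linarith
  · -- inner boundary
    intro x hx
    have hxv : RB.sf (y.1 ^ 2) y.2 x = S1 := RB.frontier_Gtil_subset y r hr hx
    have : Φ x = 1 := by
      rw [hΦdef]; simp only; rw [hxv, hBdef, hAdef]
      field_simp
      rw [hDendef]; ring
    linarith
  · -- middle sphere
    intro x hx
    have hxv : RB.sf (y.1 ^ 2) y.2 x = S2 := RB.frontier_Gtil_subset y (2 * r) h2r hx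
    have hΦx : Φ x = (S2 ^ q - S3 ^ q) / Den := by
      rw [hΦdef]; simp only; rw [hxv, hBdef, hAdef]; ring
    rw [hΦx, le_div_iff₀ hDen]
    -- key estimates
    have ha : (4 / 9 : ℝ) ^ q * S3 ^ q ≤ S2 ^ q := by
      have h' : S2 ≤ 4 / 9 * S3 := by linarith
      have h2 := Real.rpow_le_rpow_of_nonpos hS2 h' hqneg.le
      rwa [Real.mul_rpow (by norm_num) hS3.le] at h2
    have hb : S1 ^ q ≤ (1 / 81 : ℝ) ^ q * S3 ^ q := by
      have h' : 1 / 81 * S3 ≤ S1 := by linarith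
      have h2 := Real.rpow_le_rpow_of_nonpos (by positivity) h' hqneg.le
      rwa [Real.mul_rpow (by norm_num) hS3.le] at h2
    have hS3qpos : 0 < S3 ^ q := Real.rpow_pos_of_pos hS3 q
    have hstep1 : γ * Den ≤ γ * ((1 / 81 : ℝ) ^ q * S3 ^ q - S3 ^ q) := by
      apply mul_le_mul_of_nonneg_left _ hγpos.le
      rw [hDendef]; linarith
    have hstep2 : γ * ((1 / 81 : ℝ) ^ q * S3 ^ q - S3 ^ q)
        = ((4 / 9 : ℝ) ^ q - 1) * S3 ^ q := by
      rw [hγdef]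
      have hne : (1 / 81 : ℝ) ^ q - 1 ≠ 0 := by linarith
      field_simp
    refine le_trans hstep1 ?_
    rw [hstep2]
    have hexp : ((4 / 9 : ℝ) ^ q - 1) * S3 ^ q = (4 / 9 : ℝ) ^ q * S3 ^ q - S3 ^ q := by ring
    rw [hexp]
    linarith
  · -- evenness
    intro x
    have hsf : RB.sf (y.1 ^ 2) y.2 (-x.1, x.2) = RB.sf (y.1 ^ 2) y.2 x := by
      unfold RB.sf; simp only; ring_nf
    rw [hΦdef]; simp only [hsf]
end
end
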